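/- arXiv:1404.0068 — 7 statements merged into one kernel-verified Lean document; each statement's English description precedes it below -/
import Mathlib

section
/- Let H be a real Hilbert space, T > 0, K ∈ ℕ with K ≥ 1, τ = T/K, t_k = kτ, γ ∈ (0,1), and a_j = (j+1)^{1-γ} - j^{1-γ} for j ≥ 0. Suppose U^0, U^1, …, U^K ∈ H and nonnegative real numbers β_1, …, β_K and φ_1, …, φ_K satisfy, for every 0 ≤ k ≤ K-1, the inequality (Γ(2-γ) τ^γ)^{-1} ⟨ Σ_{j=0}^{k} a_j (U^{k+1-j} - U^{k-j}), U^{k+1} ⟩_H + β_{k+1}^2 ≤ φ_{k+1} β_{k+1}. Then (τ^{1-γ}/Γ(2-γ)) Σ_{j=0}^{K-1} a_j ‖U^{K-j}‖_H^2 + τ Σ_{k=1}^{K} β_k^2 ≤ (T^{1-γ}/Γ(2-γ)) ‖U^0‖_H^2 + τ Σ_{k=1}^{K} φ_k^2. (This is the unconditional stability of the implicit time-discretization of a fractional evolution problem ∂_t^γ u + 𝔉u = f in a Hilbert-space setting, with β_k playing the role of the energy norm ‖U^k‖_V = ⟨𝔉U^k,U^k⟩^{1/2} and φ_k the role of the dual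 norm ‖f^k‖_{V'}.) -/
open MeasureTheory Real Set
open scoped RealInnerProductSpace

/-- Unconditional stability of the implicit time-discretization of the fractional
evolution problem `∂_t^γ u + 𝔉 u = f` in a Hilbert space setting. -/
theorem fractional_scheme_unconditional_stability
    {H : Type*} [NormedAddCommGroup H] [InnerProductSpace ℝ H]
    (T : ℝ) (hT : 0 < T) (K : ℕ) (hK : 1 ≤ K)
    (γ : ℝ) (hγ : γ ∈ Set.Ioo (0 : ℝ) 1)
    (τ : ℝ) (hτ : τ = T / K)
    (a : ℕ → ℝ) (ha : ∀ j : ℕ, a j = ((j : ℝ) + 1) ^ (1 - γ) - (j : ℝ) ^ (1 - γ))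
    (U : ℕ → H) (β φ : ℕ → ℝ)
    (hβ : ∀ k, 1 ≤ k → k ≤ K → 0 ≤ β k)
    (hφ : ∀ k, 1 ≤ k → k ≤ K → 0 ≤ φ k)
    (hineq : ∀ k < K,
      (Real.Gamma (2 - γ) * τ ^ γ)⁻¹ *
          ⟪∑ j ∈ Finset.range (k + 1), a j • (U (k + 1 - j) - U (k - j)), U (k + 1)⟫
        + β (k + 1) ^ 2 ≤ φ (k + 1) * β (k + 1)) :
    τ ^ (1 - γ) / Real.Gamma (2 - γ) *
        ∑ j ∈ Finset.range K, a j * ‖U (K - j)‖ ^ 2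
      + τ * ∑ k ∈ Finset.Icc 1 K, β k ^ 2
    ≤ T ^ (1 - γ) / Real.Gamma (2 - γ) * ‖U 0‖ ^ 2
      + τ * ∑ k ∈ Finset.Icc 1 K, φ k ^ 2 := by
  obtain ⟨hγ0, hγ1⟩ := hγ
  have hKpos : (0:ℝ) < K := by exact_mod_cast hK
  have hτpos : 0 < τ := hτ ▸ div_pos hT hKpos
  have hΓ : 0 < Real.Gamma (2 - γ) := Real.Gamma_pos_of_pos (by linarith)
  set g : ℝ := Real.Gamma (2 - γ) * τ ^ γ with hg
  have hgpos : 0 < g := mul_pos hΓ (Real.rpow_pos_of_pos hτpos γ)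
  set w : ℕ → ℝ := fun i => ‖U i‖ ^ 2 with hw
  set E : ℕ → ℝ := fun n => ∑ j ∈ Finset.range n, a j * w (n - j) with hE
  have ha_nonneg : ∀ j, 0 ≤ a j := by
    intro j; rw [ha]
    have : (j:ℝ) ^ (1-γ) ≤ ((j:ℝ)+1) ^ (1-γ) :=
      Real.rpow_le_rpow (Nat.cast_nonneg j) (by linarith) (by linarith)
    linarith
  have ha_anti : ∀ j : ℕ, a (j+1) ≤ a j := by
    intro j
    have hcc := Real.concaveOn_rpow (p := 1-γ) (by linarith) (by linarith)
    have h2 := hcc.2 (Set.mem_Ici.2 (Nat.cast_nonneg j))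
      (Set.mem_Ici.2 (by positivity : (0:ℝ) ≤ (j:ℝ)+2))
      (by norm_num : (0:ℝ) ≤ 1/2) (by norm_num : (0:ℝ) ≤ 1/2)
      (by norm_num : (1:ℝ)/2 + 1/2 = 1)
    simp only [smul_eq_mul] at h2
    have harg : (1/2 : ℝ) * (j:ℝ) + (1/2) * ((j:ℝ)+2) = (j:ℝ)+1 := by ring
    rw [harg] at h2
    rw [ha, ha]; push_cast
    have hr : ((j:ℝ)+1+1) = (j:ℝ)+2 := by ring
    rw [hr]; linarith
  -- per-step estimate
  have step : ∀ k, k < K → E (k+1) + g * β (k+1)^2 ≤ E k + a k * w 0 + g * φ (k+1)^2 := by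
    intro k hkK
    set q : ℕ → ℝ := fun i => ⟪U i, U (k+1)⟫ with hq
    have hI : ⟪∑ j ∈ Finset.range (k + 1), a j • (U (k + 1 - j) - U (k - j)), U (k + 1)⟫
        = ∑ j ∈ Finset.range (k+1), a j * (q (k+1-j) - q (k-j)) := by
      rw [sum_inner]
      refine Finset.sum_congr rfl fun j _ => ?_
      rw [real_inner_smul_left, inner_sub_left]
    have habel : ∑ j ∈ Finset.range (k+1), a j * (q (k+1-j) - q (k-j))
        = a 0 * q (k+1) - a k * q 0 - ∑ j ∈ Finset.range k, (a j - a (j+1)) * q (k-j) := by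
      have h1 : ∑ j ∈ Finset.range (k+1), a j * q (k+1-j)
          = ∑ j ∈ Finset.range k, a (j+1) * q (k-j) + a 0 * q (k+1) := by
        rw [Finset.sum_range_succ' (fun j => a j * q (k+1-j)) k]
        simp only [Nat.add_sub_add_right, Nat.sub_zero]
      have h2 : ∑ j ∈ Finset.range (k+1), a j * q (k-j)
          = ∑ j ∈ Finset.range k, a j * q (k-j) + a k * q 0 := by
        rw [Finset.sum_range_succ]
        simp only [Nat.sub_self]
      simp only [mul_sub, Finset.sum_sub_distrib]
      rw [h1, h2]
      simp only [sub_mul, Finset.sum_sub_distrib]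
      ring
    have hEdiff : E (k+1) = E k + a 0 * w (k+1)
        - ∑ j ∈ Finset.range k, (a j - a (j+1)) * w (k-j) := by
      have h1 : E (k+1) = ∑ j ∈ Finset.range k, a (j+1) * w (k-j) + a 0 * w (k+1) := by
        rw [show E (k+1) = ∑ j ∈ Finset.range (k+1), a j * w (k+1-j) from rfl,
          Finset.sum_range_succ' (fun j => a j * w (k+1-j)) k]
        simp only [Nat.add_sub_add_right, Nat.sub_zero]
      rw [h1, show E k = ∑ j ∈ Finset.range k, a j * w (k-j) from rfl]
      simp only [sub_mul, Finset.sum_sub_distrib]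
      ring
    have hterm : ∀ j ∈ Finset.range k,
        0 ≤ (a j - a (j+1)) * (w (k-j) + w (k+1) - 2 * q (k-j)) := by
      intro j _
      apply mul_nonneg (by have := ha_anti j; linarith)
      have hns := norm_sub_sq_real (U (k-j)) (U (k+1))
      have h0 : (0:ℝ) ≤ ‖U (k-j) - U (k+1)‖^2 := sq_nonneg _
      show 0 ≤ ‖U (k-j)‖^2 + ‖U (k+1)‖^2 - 2 * ⟪U (k-j), U (k+1)⟫
      linarith
    have hsum0 : 0 ≤ ∑ j ∈ Finset.range k,
        (a j - a (j+1)) * (w (k-j) + w (k+1) - 2 * q (k-j)) := Finset.sum_nonneg hterm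
    have hexp : ∑ j ∈ Finset.range k, (a j - a (j+1)) * (w (k-j) + w (k+1) - 2 * q (k-j))
        = ∑ j ∈ Finset.range k, (a j - a (j+1)) * w (k-j) + (a 0 - a k) * w (k+1)
          - 2 * ∑ j ∈ Finset.range k, (a j - a (j+1)) * q (k-j) := by
      rw [← Finset.sum_range_sub' a k, Finset.sum_mul, Finset.mul_sum,
        ← Finset.sum_add_distrib, ← Finset.sum_sub_distrib]
      exact Finset.sum_congr rfl fun j _ => by ring
    rw [hexp] at hsum0
    have hq0 : 2 * q 0 ≤ w 0 + w (k+1) := by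
      have h1 := real_inner_le_norm (U 0) (U (k+1))
      have h2 := sq_nonneg (‖U 0‖ - ‖U (k+1)‖)
      show 2 * ⟪U 0, U (k+1)⟫ ≤ ‖U 0‖^2 + ‖U (k+1)‖^2
      nlinarith
    have hq1 : q (k+1) = w (k+1) := real_inner_self_eq_norm_sq (U (k+1))
    have h1 := hineq k hkK
    rw [hI, habel] at h1
    have hβk := hβ (k+1) (by omega) (by omega)
    have hφk := hφ (k+1) (by omega) (by omega)
    have hIle : a 0 * q (k+1) - a k * q 0
        - ∑ j ∈ Finset.range k, (a j - a (j+1)) * q (k-j)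
        ≤ g * (φ (k+1)^2 - β (k+1)^2) / 2 := by
      set Iv := a 0 * q (k+1) - a k * q 0
        - ∑ j ∈ Finset.range k, (a j - a (j+1)) * q (k-j) with hIv
      have h2 : g⁻¹ * Iv ≤ (φ (k+1)^2 - β (k+1)^2)/2 := by
        nlinarith [sq_nonneg (φ (k+1) - β (k+1))]
      calc Iv = g * (g⁻¹ * Iv) := by field_simp
      _ ≤ g * ((φ (k+1)^2 - β (k+1)^2)/2) := mul_le_mul_of_nonneg_left h2 hgpos.le
      _ = g * (φ (k+1)^2 - β (k+1)^2) / 2 := by ring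
    rw [hq1] at hIle
    have hak := ha_nonneg k
    have hq0' := mul_le_mul_of_nonneg_left hq0 hak
    rw [hEdiff]
    linarith
  -- summation
  have main : ∀ n, n ≤ K →
      E n + g * ∑ k ∈ Finset.range n, β (k+1)^2
        ≤ (∑ k ∈ Finset.range n, a k) * w 0 + g * ∑ k ∈ Finset.range n, φ (k+1)^2 := by
    intro n
    induction n with
    | zero =>
      intro _
      have h0 : E 0 = 0 := by simp [hE]
      simp [h0]
    | succ m ih =>
      intro hn
      have h1 := ih (by omega)
      have h2 := step m (by omega)
      rw [Finset.sum_range_succ, Finset.sum_range_succ,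
        Finset.sum_range_succ (fun k => φ (k+1)^2)]
      linarith
  have hmain := main K le_rfl
  have hasum : ∑ k ∈ Finset.range K, a k = (K:ℝ) ^ (1-γ) := by
    have h := Finset.sum_range_sub (fun i : ℕ => ((i:ℝ)) ^ (1-γ)) K
    push_cast at h
    simp only [ha]
    rw [h, Real.zero_rpow (ne_of_gt (by linarith : (0:ℝ) < 1 - γ)), sub_zero]
  rw [hasum] at hmain
  have hIcc : ∀ f : ℕ → ℝ, ∑ k ∈ Finset.Icc 1 K, f k = ∑ k ∈ Finset.range K, f (k+1) := by
    intro f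
    rw [← Finset.Ico_add_one_right_eq_Icc, Finset.sum_Ico_eq_sum_range]
    exact Finset.sum_congr (by norm_num) fun k _ => by rw [Nat.add_comm]
  have hτγ : τ ^ (1-γ) * τ ^ γ = τ := by
    rw [← Real.rpow_add hτpos]; norm_num
  have hdg : τ ^ (1-γ) / Real.Gamma (2-γ) * g = τ := by
    calc τ ^ (1-γ) / Real.Gamma (2-γ) * g
        = (τ ^ (1-γ) * τ ^ γ) * (Real.Gamma (2-γ) / Real.Gamma (2-γ)) := by rw [hg]; ring
    _ = τ := by rw [hτγ, div_self hΓ.ne', mul_one]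
  have hτK : τ * K = T := by
    rw [hτ]; field_simp
  have hdK : τ ^ (1-γ) / Real.Gamma (2-γ) * (K:ℝ)^(1-γ) = T^(1-γ)/Real.Gamma (2-γ) := by
    calc τ ^ (1-γ) / Real.Gamma (2-γ) * (K:ℝ)^(1-γ)
        = (τ ^ (1-γ) * (K:ℝ)^(1-γ))/Real.Gamma (2-γ) := by ring
    _ = ((τ * K) ^ (1-γ))/Real.Gamma (2-γ) := by
        rw [Real.mul_rpow hτpos.le (Nat.cast_nonneg K)]
    _ = T^(1-γ)/Real.Gamma (2-γ) := by rw [hτK]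
  have hd : 0 ≤ τ ^ (1-γ) / Real.Gamma (2-γ) :=
    div_nonneg (Real.rpow_nonneg hτpos.le _) hΓ.le
  have hfin : τ ^ (1-γ) / Real.Gamma (2-γ) * E K + τ * ∑ k ∈ Finset.range K, β (k+1)^2
      ≤ T^(1-γ)/Real.Gamma (2-γ) * w 0 + τ * ∑ k ∈ Finset.range K, φ (k+1)^2 := by
    have h := mul_le_mul_of_nonneg_left hmain hd
    calc τ ^ (1-γ) / Real.Gamma (2-γ) * E K + τ * ∑ k ∈ Finset.range K, β (k+1)^2
        = τ ^ (1-γ) / Real.Gamma (2-γ)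
            * (E K + g * ∑ k ∈ Finset.range K, β (k+1)^2) := by
              rw [mul_add, ← mul_assoc, hdg]
    _ ≤ τ ^ (1-γ) / Real.Gamma (2-γ)
          * ((K:ℝ)^(1-γ) * w 0 + g * ∑ k ∈ Finset.range K, φ (k+1)^2) := h
    _ = (τ ^ (1-γ) / Real.Gamma (2-γ) * (K:ℝ)^(1-γ)) * w 0
          + (τ ^ (1-γ) / Real.Gamma (2-γ) * g) * ∑ k ∈ Finset.range K, φ (k+1)^2 := by ring
    _ = T^(1-γ)/Real.Gamma (2-γ) * w 0 + τ * ∑ k ∈ Finset.range K, φ (k+1)^2 := by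
        rw [hdg, hdK]
  rw [hIcc (fun k => β k ^ 2), hIcc (fun k => φ k ^ 2)]
  simp only [hE, hw] at hfin
  exact hfin
end

section
/- Let X be a real Banach space, γ ∈ (0,1), T > 0, and σ > 3 - 2γ. There exists a constant C, depending only on γ, σ and T, with the following property. Let K ∈ ℕ, K ≥ 1, τ = T/K, t_k = kτ, and A ≥ 0. Let u : [0,T] → X be continuous and twice continuously differentiable on (0,T], and satisfy: (i) ‖u'(t) - t^{-1}(u(t) - u(0))‖_X ≤ A t^{γ-1} for all t ∈ (0,T]; (ii) ∫_0^T t^σ ‖u''(t)‖_X^2 dt ≤ A^2. For 1 ≤ j ≤ K define R_j = u'(t_j) - τ^{-1}(u(t_j) - u(t_{j-1})). Then τ Σ_{j=1}^{K} ‖R_j‖_X^2 ≤ C τ^{2-σ} A^2. -/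
open MeasureTheory Real Set

lemma cs_one {a b : ℝ} (hab : a ≤ b) {f : ℝ → ℝ} (hf : ContinuousOn f (Icc a b))
    (hnn : ∀ s ∈ Icc a b, 0 ≤ f s) :
    (∫ s in Ioc a b, f s) ^ 2 ≤ (b - a) * ∫ s in Ioc a b, f s ^ 2 := by
  set μ := volume.restrict (Ioc a b) with hμ
  haveI : IsFiniteMeasure μ := ⟨by
    rw [hμ, Measure.restrict_apply_univ, Real.volume_Ioc]
    exact ENNReal.ofReal_lt_top⟩
  have hfIoc : ContinuousOn f (Ioc a b) := hf.mono Ioc_subset_Icc_self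
  have hmeas : AEStronglyMeasurable f μ := hfIoc.aestronglyMeasurable measurableSet_Ioc
  have hsq : IntegrableOn (fun s => f s ^ 2) (Ioc a b) :=
    ((hf.pow 2).integrableOn_compact isCompact_Icc).mono_set Ioc_subset_Icc_self
  have hf2 : MemLp f 2 μ := (memLp_two_iff_integrable_sq hmeas).2 hsq
  have hg2 : MemLp (fun _ : ℝ => (1 : ℝ)) 2 μ := memLp_const 1
  have hconj : Real.HolderConjugate 2 2 := ⟨by norm_num, by norm_num, by norm_num⟩
  have hfae : 0 ≤ᵐ[μ] f := (ae_restrict_iff' measurableSet_Ioc).2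
    (Filter.Eventually.of_forall fun s hs => hnn s (Ioc_subset_Icc_self hs))
  have h := MeasureTheory.integral_mul_le_Lp_mul_Lq_of_nonneg hconj hfae
    (Filter.Eventually.of_forall fun _ => zero_le_one)
    (by simpa using hf2) (by simpa using hg2)
  have hrw : ∀ x : ℝ, x ^ (2 : ℝ) = x ^ 2 := fun x => by
    rw [show (2:ℝ) = ((2:ℕ):ℝ) by norm_num, Real.rpow_natCast]
  simp only [hrw, mul_one, one_pow] at h
  have h1 : ∫ _ : ℝ, (1 : ℝ) ∂μ = b - a := by
    simp [hμ, Real.volume_Ioc, ENNReal.toReal_ofReal (sub_nonneg.2 hab), hab]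
  rw [h1] at h
  have hJ : 0 ≤ ∫ s, f s ^ 2 ∂μ := integral_nonneg fun s => sq_nonneg _
  have hI : 0 ≤ ∫ s, f s ∂μ := integral_nonneg_of_ae hfae
  calc (∫ s, f s ∂μ) ^ 2 ≤ ((∫ s, f s ^ 2 ∂μ) ^ (1/2 : ℝ) * (b - a) ^ (1/2 : ℝ)) ^ 2 := by
        apply pow_le_pow_left₀ hI h
    _ = (b - a) * ∫ s, f s ^ 2 ∂μ := by
        rw [mul_pow, ← Real.rpow_natCast ((∫ s, f s ^ 2 ∂μ) ^ (1/2:ℝ)) 2,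
          ← Real.rpow_natCast ((b - a) ^ (1/2:ℝ)) 2,
          ← Real.rpow_mul hJ, ← Real.rpow_mul (sub_nonneg.2 hab)]
        norm_num
        ring

/-- Estimate for the backward difference quotient residual `R_j = u'(t_j) - δ¹u(t_j)`
under realistic time regularity of solutions of fractional-in-time parabolic problems. -/
theorem backward_difference_residual_estimate
    {X : Type*} [NormedAddCommGroup X] [NormedSpace ℝ X]
    (γ T σ : ℝ) (hγ : γ ∈ Set.Ioo (0 : ℝ) 1) (hT : 0 < T)
    (hσ : 3 - 2 * γ < σ) :
    ∃ C > 0, ∀ (K : ℕ), 1 ≤ K → ∀ (τ : ℝ), τ = T / K →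
      ∀ (A : ℝ), 0 ≤ A → ∀ (u u' u'' : ℝ → X),
      ContinuousOn u (Set.Icc 0 T) →
      (∀ t ∈ Set.Ioc (0 : ℝ) T, HasDerivAt u (u' t) t) →
      (∀ t ∈ Set.Ioc (0 : ℝ) T, HasDerivAt u' (u'' t) t) →
      ContinuousOn u' (Set.Ioc 0 T) →
      ContinuousOn u'' (Set.Ioc 0 T) →
      (∀ t ∈ Set.Ioc (0 : ℝ) T, ‖u' t - t⁻¹ • (u t - u 0)‖ ≤ A * t ^ (γ - 1)) →
      MeasureTheory.IntegrableOn (fun t => t ^ σ * ‖u'' t‖ ^ 2) (Set.Ioc 0 T) →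
      (∫ t in Set.Ioc (0 : ℝ) T, t ^ σ * ‖u'' t‖ ^ 2) ≤ A ^ 2 →
      τ * ∑ j ∈ Finset.Icc 1 K,
          ‖u' ((j : ℝ) * τ) - τ⁻¹ • (u ((j : ℝ) * τ) - u (((j : ℝ) - 1) * τ))‖ ^ 2
        ≤ C * τ ^ (2 - σ) * A ^ 2 := by
  obtain ⟨hγ0, hγ1⟩ := hγ
  have hσ0 : 0 < σ := by linarith
  refine ⟨T ^ (σ + 2*γ - 3) + 1, by
    have := Real.rpow_nonneg hT.le (σ + 2*γ - 3); linarith, ?_⟩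
  intro K hK τ hτ A hA u u' u'' hu hd1 hd2 hc1 hc2 hi hInt hIntLe
  have hK0 : (0:ℝ) < (K:ℝ) := by exact_mod_cast Nat.lt_of_lt_of_le Nat.zero_lt_one hK
  have hτ0 : 0 < τ := hτ ▸ div_pos hT hK0
  have hKτ : (K:ℝ) * τ = T := by rw [hτ]; field_simp
  have hτT : τ ≤ T := by
    rw [hτ]
    exact div_le_self hT.le (by exact_mod_cast hK)
  set F : ℝ → ℝ := fun s => s ^ σ * ‖u'' s‖ ^ 2 with hF
  have hFnn : ∀ s ∈ Ioc (0:ℝ) T, 0 ≤ F s := fun s hs =>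
    mul_nonneg (Real.rpow_nonneg hs.1.le σ) (sq_nonneg _)
  have hFc : ContinuousOn F (Ioc 0 T) := fun s hs =>
    ((Real.continuousAt_rpow_const s σ (Or.inl hs.1.ne')).continuousWithinAt.mul
      ((hc2 s hs).norm.pow 2))
  -- move to the completion of X to use the FTC
  set ι : X →L[ℝ] UniformSpace.Completion X := UniformSpace.Completion.toComplL with hι
  have hnormι : ∀ x : X, ‖ι x‖ = ‖x‖ := fun x => UniformSpace.Completion.norm_coe x
  -- The key pointwise bound on each subinterval away from zero.
  have key : ∀ a b : ℝ, 0 < a → a < b → b ≤ T →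
      ‖u' b - (b - a)⁻¹ • (u b - u a)‖ ^ 2 ≤ (b - a) * (a ^ (-σ) * ∫ s in a..b, F s) := by
    intro a b ha hlt hb
    have hab := hlt.le
    have hsub : Icc a b ⊆ Ioc 0 T := fun s hs => ⟨ha.trans_le hs.1, hs.2.trans hb⟩
    have hc2' : ContinuousOn u'' (Icc a b) := hc2.mono hsub
    have hc2ι : ContinuousOn (fun s => ι (u'' s)) (Icc a b) :=
      ι.continuous.comp_continuousOn hc2'
    have hderiv : ∀ s ∈ Set.uIcc a b,
        HasDerivAt (fun t => (t - a) • ι (u' t) - ι (u t)) ((s - a) • ι (u'' s)) s := by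
      intro s hs
      rw [Set.uIcc_of_le hab] at hs
      have h1 : HasDerivAt (fun t => ι (u t)) (ι (u' s)) s :=
        ι.hasFDerivAt.comp_hasDerivAt s (hd1 s (hsub hs))
      have h2 : HasDerivAt (fun t => ι (u' t)) (ι (u'' s)) s :=
        ι.hasFDerivAt.comp_hasDerivAt s (hd2 s (hsub hs))
      have h3 : HasDerivAt (fun t : ℝ => t - a) 1 s := (hasDerivAt_id s).sub_const a
      have h4 := (h3.smul h2).sub h1
      have h5 : HasDerivAt (fun t => (t - a) • ι (u' t) - ι (u t)) ((s - a) • ι (u'' s) + (1:ℝ) • ι (u' s) - ι (u' s)) s := h4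
      simpa using h5
    have hii : IntervalIntegrable (fun s => (s - a) • ι (u'' s)) volume a b :=
      ((continuousOn_id.sub continuousOn_const).smul hc2ι).intervalIntegrable_of_Icc hab
    have heq := intervalIntegral.integral_eq_sub_of_hasDerivAt hderiv hii
    have hba0 : b - a ≠ 0 := sub_ne_zero.2 hlt.ne'
    have hR : ι (u' b) - (b - a)⁻¹ • (ι (u b) - ι (u a))
        = (b - a)⁻¹ • ∫ s in a..b, (s - a) • ι (u'' s) := by
      rw [heq]
      have expand : ((b - a) • ι (u' b) - ι (u b)) - ((a - a) • ι (u' a) - ι (u a))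
          = (b - a) • ι (u' b) - (ι (u b) - ι (u a)) := by
        rw [sub_self, zero_smul, zero_sub]; abel
      rw [expand]
      conv_rhs => rw [smul_sub, smul_smul, inv_mul_cancel₀ hba0, one_smul]
    have hLHSeq : ‖u' b - (b - a)⁻¹ • (u b - u a)‖
        = ‖ι (u' b) - (b - a)⁻¹ • (ι (u b) - ι (u a))‖ := by
      rw [← hnormι (u' b - (b - a)⁻¹ • (u b - u a))]
      congr 1
      simp [map_sub, _root_.map_smul]
    have hnormint : IntervalIntegrable (fun s => ‖u'' s‖) volume a b :=
      hc2'.norm.intervalIntegrable_of_Icc hab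
    have hsqint : IntervalIntegrable (fun s => ‖u'' s‖ ^ 2) volume a b :=
      (hc2'.norm.pow 2).intervalIntegrable_of_Icc hab
    have hFint : IntervalIntegrable F volume a b :=
      (hFc.mono hsub).intervalIntegrable_of_Icc hab
    have step1 : ‖u' b - (b - a)⁻¹ • (u b - u a)‖ ≤ ∫ s in a..b, ‖u'' s‖ := by
      rw [hLHSeq, hR, norm_smul]
      have h6 : ‖∫ s in a..b, (s - a) • ι (u'' s)‖ ≤ ∫ s in a..b, ‖(s - a) • ι (u'' s)‖ :=
        intervalIntegral.norm_integral_le_integral_norm hab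
      have h7 : (∫ s in a..b, ‖(s - a) • ι (u'' s)‖) ≤ ∫ s in a..b, (b - a) * ‖u'' s‖ := by
        apply intervalIntegral.integral_mono_on hab hii.norm (hnormint.const_mul _)
        intro s hs
        rw [norm_smul, Real.norm_eq_abs, abs_of_nonneg (sub_nonneg.2 hs.1), hnormι]
        exact mul_le_mul_of_nonneg_right (by linarith [hs.2]) (norm_nonneg _)
      rw [intervalIntegral.integral_const_mul] at h7
      have h8 : ‖(b - a)⁻¹‖ = (b - a)⁻¹ := by
        rw [Real.norm_eq_abs, abs_of_pos (inv_pos.2 (sub_pos.2 hlt))]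
      rw [h8]
      calc (b - a)⁻¹ * ‖∫ s in a..b, (s - a) • ι (u'' s)‖
          ≤ (b - a)⁻¹ * ((b - a) * ∫ s in a..b, ‖u'' s‖) :=
            mul_le_mul_of_nonneg_left (h6.trans h7) (inv_nonneg.2 (sub_nonneg.2 hab))
        _ = ∫ s in a..b, ‖u'' s‖ := by
            rw [← mul_assoc, inv_mul_cancel₀ hba0, one_mul]
    have step2 : (∫ s in a..b, ‖u'' s‖) ^ 2 ≤ (b - a) * ∫ s in a..b, ‖u'' s‖ ^ 2 := by
      rw [intervalIntegral.integral_of_le hab, intervalIntegral.integral_of_le hab]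
      exact cs_one hab hc2'.norm fun s _ => norm_nonneg _
    have step3 : (∫ s in a..b, ‖u'' s‖ ^ 2) ≤ a ^ (-σ) * ∫ s in a..b, F s := by
      rw [← intervalIntegral.integral_const_mul]
      apply intervalIntegral.integral_mono_on hab hsqint (hFint.const_mul _)
      intro s hs
      have h8 : (1:ℝ) ≤ a ^ (-σ) * s ^ σ := by
        have h9 : a ^ σ ≤ s ^ σ := Real.rpow_le_rpow ha.le hs.1 hσ0.le
        have hpos : 0 < a ^ σ := Real.rpow_pos_of_pos ha σ
        rw [Real.rpow_neg ha.le]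
        calc (1:ℝ) = (a ^ σ)⁻¹ * a ^ σ := (inv_mul_cancel₀ hpos.ne').symm
          _ ≤ (a ^ σ)⁻¹ * s ^ σ :=
            mul_le_mul_of_nonneg_left h9 (inv_nonneg.2 hpos.le)
      calc ‖u'' s‖ ^ 2 = 1 * ‖u'' s‖ ^ 2 := (one_mul _).symm
        _ ≤ (a ^ (-σ) * s ^ σ) * ‖u'' s‖ ^ 2 :=
            mul_le_mul_of_nonneg_right h8 (sq_nonneg _)
        _ = a ^ (-σ) * F s := by rw [hF]; ring
    calc ‖u' b - (b - a)⁻¹ • (u b - u a)‖ ^ 2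
        ≤ (∫ s in a..b, ‖u'' s‖) ^ 2 := pow_le_pow_left₀ (norm_nonneg _) step1 2
      _ ≤ (b - a) * ∫ s in a..b, ‖u'' s‖ ^ 2 := step2
      _ ≤ (b - a) * (a ^ (-σ) * ∫ s in a..b, F s) :=
          mul_le_mul_of_nonneg_left step3 (sub_nonneg.2 hab)
  set g : ℕ → ℝ := fun j =>
    ‖u' ((j : ℝ) * τ) - τ⁻¹ • (u ((j : ℝ) * τ) - u (((j : ℝ) - 1) * τ))‖ ^ 2 with hg
  -- j = 1 term
  have hg1 : g 1 ≤ A ^ 2 * τ ^ (2*γ - 2) := by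
    have h := hi τ ⟨hτ0, hτT⟩
    have e1 : ((1:ℕ):ℝ) * τ = τ := by norm_num
    have e2 : (((1:ℕ):ℝ) - 1) * τ = 0 := by norm_num
    have hb : g 1 ≤ (A * τ ^ (γ - 1)) ^ 2 := by
      rw [hg]
      simp only [e1, e2]
      exact pow_le_pow_left₀ (norm_nonneg _) h 2
    refine hb.trans (le_of_eq ?_)
    rw [mul_pow, ← Real.rpow_natCast (τ ^ (γ-1)) 2, ← Real.rpow_mul hτ0.le,
      show (γ - 1) * ((2:ℕ):ℝ) = 2*γ - 2 by push_cast; ring]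
  -- interval integrability helper
  have hFii : ∀ a b : ℝ, 0 < a → a ≤ b → b ≤ T → IntervalIntegrable F volume a b :=
    fun a b ha hab hb =>
      (hFc.mono fun s hs => ⟨ha.trans_le hs.1, hs.2.trans hb⟩).intervalIntegrable_of_Icc hab
  set aa : ℕ → ℝ := fun k => ((k:ℝ) + 1) * τ with haa
  have haapos : ∀ k : ℕ, 0 < aa k := fun k => by
    rw [haa]; positivity
  have haamono : ∀ k : ℕ, aa k < aa (k+1) := fun k => by
    rw [haa]; push_cast
    apply mul_lt_mul_of_pos_right (by linarith) hτ0
  have haale : ∀ k : ℕ, k + 1 ≤ K → aa k ≤ T := fun k hk => by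
    rw [haa, ← hKτ]
    apply mul_le_mul_of_nonneg_right _ hτ0.le
    have : ((k:ℝ)+1) ≤ (K:ℝ) := by exact_mod_cast hk
    exact this
  -- j ≥ 2 terms
  have hkey2 : ∀ i : ℕ, i < K - 1 →
      g (i + 2) ≤ τ * (τ ^ (-σ) * ∫ s in aa i..aa (i+1), F s) := by
    intro i hi2
    have ha : 0 < aa i := haapos i
    have hlt : aa i < aa (i+1) := haamono i
    have hb : aa (i+1) ≤ T := haale (i+1) (by omega)
    have h := key (aa i) (aa (i+1)) ha hlt hb
    have hba : aa (i+1) - aa i = τ := by rw [haa]; push_cast; ring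
    rw [hba] at h
    have eb : ((i+2:ℕ):ℝ) * τ = aa (i+1) := by rw [haa]; push_cast; ring
    have ea : (((i+2:ℕ):ℝ) - 1) * τ = aa i := by rw [haa]; push_cast; ring
    have hgl : g (i+2) = ‖u' (aa (i+1)) - τ⁻¹ • (u (aa (i+1)) - u (aa i))‖ ^ 2 := by
      simp only [hg]; rw [eb, ea]
    rw [hgl]
    refine h.trans ?_
    have hτa : τ ≤ aa i := by
      rw [haa]
      exact le_mul_of_one_le_left hτ0.le (by linarith [Nat.cast_nonneg (α := ℝ) i])
    have hmono : (aa i) ^ (-σ) ≤ τ ^ (-σ) := by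
      rw [Real.rpow_neg hτ0.le, Real.rpow_neg ha.le]
      exact inv_anti₀ (Real.rpow_pos_of_pos hτ0 σ)
        (Real.rpow_le_rpow hτ0.le hτa hσ0.le)
    have hFnn' : 0 ≤ ∫ s in aa i..aa (i+1), F s :=
      intervalIntegral.integral_nonneg hlt.le fun s hs =>
        hFnn s ⟨ha.trans_le hs.1, hs.2.trans hb⟩
    exact mul_le_mul_of_nonneg_left
      (mul_le_mul_of_nonneg_right hmono hFnn') hτ0.le
  -- telescoping the integrals
  have hsum : ∑ i ∈ Finset.range (K-1), ∫ s in aa i..aa (i+1), F s = ∫ s in τ..T, F s := by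
    have h := intervalIntegral.sum_integral_adjacent_intervals (μ := volume) (f := F)
      (a := aa) (n := K-1)
      (fun k hk => hFii (aa k) (aa (k+1)) (haapos k) (haamono k).le (haale (k+1) (by omega)))
    rw [h]
    have e0 : aa 0 = τ := by rw [haa]; norm_num
    have eK : aa (K-1) = T := by
      simp only [haa]
      rw [← hKτ]
      have : ((K-1:ℕ):ℝ) = (K:ℝ) - 1 := by
        rw [Nat.cast_sub hK]; norm_num
      rw [this]; ring
    rw [e0, eK]
  have htail : ∫ s in τ..T, F s ≤ A ^ 2 := by
    rw [intervalIntegral.integral_of_le hτT]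
    refine le_trans (setIntegral_mono_set hInt ?_ ?_) hIntLe
    · exact (ae_restrict_iff' measurableSet_Ioc).2
        (Filter.Eventually.of_forall fun s hs => hFnn s hs)
    · exact HasSubset.Subset.eventuallyLE (Ioc_subset_Ioc_left hτ0.le)
  -- decompose the sum
  have hdecomp : ∑ j ∈ Finset.Icc 1 K, g j = g 1 + ∑ i ∈ Finset.range (K-1), g (i+2) := by
    obtain ⟨K', rfl⟩ : ∃ K', K = K' + 1 := ⟨K - 1, by omega⟩
    rw [show Finset.Icc 1 (K'+1) = Finset.Ico 1 (K'+1+1) from (Finset.Ico_add_one_right_eq_Icc 1 (K'+1)).symm]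
    rw [Finset.sum_Ico_eq_sum_range]
    simp only [Nat.add_sub_cancel]
    rw [Finset.sum_range_succ']
    rw [add_comm]
    congr 1
    apply Finset.sum_congr rfl
    intro i _
    congr 1
    omega
  -- final computation
  have hrpow2 : 0 ≤ τ ^ (2 - σ) := Real.rpow_nonneg hτ0.le _
  have hTe : 0 ≤ T ^ (σ + 2*γ - 3) := Real.rpow_nonneg hT.le _
  have e1 : τ * (A ^ 2 * τ ^ (2*γ - 2)) = A ^ 2 * (τ ^ (σ + 2*γ - 3) * τ ^ (2 - σ)) := by
    calc τ * (A ^ 2 * τ ^ (2*γ - 2)) = A ^ 2 * (τ ^ (1:ℝ) * τ ^ (2*γ - 2)) := by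
          rw [Real.rpow_one]; ring
      _ = A ^ 2 * τ ^ (1 + (2*γ - 2)) := by rw [← Real.rpow_add hτ0]
      _ = A ^ 2 * τ ^ ((σ + 2*γ - 3) + (2 - σ)) := by
          rw [show (1:ℝ) + (2*γ - 2) = (σ + 2*γ - 3) + (2 - σ) by ring]
      _ = A ^ 2 * (τ ^ (σ + 2*γ - 3) * τ ^ (2 - σ)) := by rw [Real.rpow_add hτ0]
  have e2 : τ * (τ * (τ ^ (-σ) * A ^ 2)) = τ ^ (2 - σ) * A ^ 2 := by
    calc τ * (τ * (τ ^ (-σ) * A ^ 2)) = (τ ^ (1:ℝ) * (τ ^ (1:ℝ) * τ ^ (-σ))) * A ^ 2 := by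
          rw [Real.rpow_one]; ring
      _ = τ ^ (1 + (1 + -σ)) * A ^ 2 := by rw [← Real.rpow_add hτ0, ← Real.rpow_add hτ0]
      _ = τ ^ (2 - σ) * A ^ 2 := by rw [show (1:ℝ) + (1 + -σ) = 2 - σ by ring]
  have e3 : τ ^ (σ + 2*γ - 3) ≤ T ^ (σ + 2*γ - 3) :=
    Real.rpow_le_rpow hτ0.le hτT (by linarith)
  calc τ * ∑ j ∈ Finset.Icc 1 K, g j
      = τ * g 1 + τ * ∑ i ∈ Finset.range (K-1), g (i+2) := by rw [hdecomp]; ring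
    _ ≤ τ * (A ^ 2 * τ ^ (2*γ - 2)) + τ * (τ * (τ ^ (-σ) * A ^ 2)) := by
        apply add_le_add
        · exact mul_le_mul_of_nonneg_left hg1 hτ0.le
        · apply mul_le_mul_of_nonneg_left _ hτ0.le
          calc ∑ i ∈ Finset.range (K-1), g (i+2)
              ≤ ∑ i ∈ Finset.range (K-1), τ * (τ ^ (-σ) * ∫ s in aa i..aa (i+1), F s) :=
                Finset.sum_le_sum fun i hi => hkey2 i (Finset.mem_range.1 hi)
            _ = τ * (τ ^ (-σ) * ∑ i ∈ Finset.range (K-1), ∫ s in aa i..aa (i+1), F s) := by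
                rw [← Finset.mul_sum, ← Finset.mul_sum]
            _ = τ * (τ ^ (-σ) * ∫ s in τ..T, F s) := by rw [hsum]
            _ ≤ τ * (τ ^ (-σ) * A ^ 2) := by
                apply mul_le_mul_of_nonneg_left _ hτ0.le
                exact mul_le_mul_of_nonneg_left htail (Real.rpow_nonneg hτ0.le _)
    _ = A ^ 2 * (τ ^ (σ + 2*γ - 3) * τ ^ (2 - σ)) + τ ^ (2 - σ) * A ^ 2 := by rw [e1, e2]
    _ ≤ A ^ 2 * (T ^ (σ + 2*γ - 3) * τ ^ (2 - σ)) + τ ^ (2 - σ) * A ^ 2 := by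
        apply add_le_add_left
        exact mul_le_mul_of_nonneg_left
          (mul_le_mul_of_nonneg_right e3 hrpow2) (sq_nonneg A)
    _ = (T ^ (σ + 2*γ - 3) + 1) * τ ^ (2 - σ) * A ^ 2 := by ring
end

section
/- Let γ ∈ (0,1), τ > 0, k ∈ ℕ, and set t_j = jτ for j = 0, …, k+1. Define ψ(t) = (t_{k+1} - t)^{-γ} for t < t_{k+1}, let ψ̄_j = τ^{-1} ∫_{t_j}^{t_{j+1}} ψ(t) dt for 0 ≤ j ≤ k-1, and set ψ̄_k = 0. Then Σ_{j=0}^{k} ∫_{t_j}^{t_{j+1}} |ψ(t) - ψ̄_j| dt ≤ ((2-γ)/(1-γ)) τ^{1-γ}. -/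
open MeasureTheory Real Set

/-- Kernel estimate: the total `L¹`-distance between the Caputo kernel
`ψ(t) = (t_{k+1} - t)^{-γ}` and its interval averages is bounded by
`((2-γ)/(1-γ)) τ^{1-γ}`. -/
theorem caputo_kernel_L1_estimate
    (γ τ : ℝ) (hγ : γ ∈ Set.Ioo (0 : ℝ) 1) (hτ : 0 < τ) (k : ℕ)
    (ψbar : ℕ → ℝ)
    (hψbar : ∀ j < k, ψbar j =
      τ⁻¹ * ∫ t in ((j : ℝ) * τ)..(((j : ℝ) + 1) * τ),
        (((k : ℝ) + 1) * τ - t) ^ (-γ))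
    (hψbark : ψbar k = 0) :
    ∑ j ∈ Finset.range (k + 1),
        ∫ t in ((j : ℝ) * τ)..(((j : ℝ) + 1) * τ),
          |(((k : ℝ) + 1) * τ - t) ^ (-γ) - ψbar j|
      ≤ (2 - γ) / (1 - γ) * τ ^ (1 - γ) := by
  obtain ⟨hγ0, hγ1⟩ := hγ
  have h1γ : 0 < 1 - γ := by linarith
  -- the last term
  have hlast : (∫ t in ((k : ℝ) * τ)..(((k : ℝ) + 1) * τ),
          |(((k : ℝ) + 1) * τ - t) ^ (-γ) - ψbar k|) = τ ^ (1 - γ) / (1 - γ) := by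
    rw [hψbark]
    have h1 : (∫ t in ((k : ℝ) * τ)..(((k : ℝ) + 1) * τ),
          |(((k : ℝ) + 1) * τ - t) ^ (-γ) - 0|)
        = ∫ t in ((k : ℝ) * τ)..(((k : ℝ) + 1) * τ),
            (((k : ℝ) + 1) * τ - t) ^ (-γ) := by
      apply intervalIntegral.integral_congr
      intro t ht
      rw [Set.uIcc_of_le (by nlinarith)] at ht
      have hnn : 0 ≤ ((k : ℝ) + 1) * τ - t := by linarith [ht.2]
      simp [abs_of_nonneg (Real.rpow_nonneg hnn _)]
    rw [h1,
      intervalIntegral.integral_comp_sub_left (fun x => x ^ (-γ)) (((k : ℝ) + 1) * τ),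
      show ((k:ℝ)+1)*τ - ((k:ℝ)+1)*τ = 0 by ring,
      show ((k:ℝ)+1)*τ - (k:ℝ)*τ = τ by ring,
      integral_rpow (Or.inl (by linarith)),
      Real.zero_rpow (by linarith), show -γ + 1 = 1 - γ by ring]
    ring
  -- the other terms
  have key : ∀ j < k, (∫ t in ((j : ℝ) * τ)..(((j : ℝ) + 1) * τ),
          |(((k : ℝ) + 1) * τ - t) ^ (-γ) - ψbar j|)
      ≤ τ * ((((k:ℝ) - j) * τ) ^ (-γ) - (((k:ℝ) + 1 - j) * τ) ^ (-γ)) := by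
    intro j hj
    have hjk : (j:ℝ) + 1 ≤ (k:ℝ) := by exact_mod_cast hj
    set a := (j:ℝ)*τ with ha
    set b := ((j:ℝ)+1)*τ with hb
    have hab : a ≤ b := by nlinarith
    set m := (((k:ℝ) + 1 - j) * τ) ^ (-γ) with hm
    set M := (((k:ℝ) - j) * τ) ^ (-γ) with hM
    have hkj : (0:ℝ) < ((k:ℝ) - j) * τ := by nlinarith
    have hbound : ∀ t ∈ Set.Icc a b,
        m ≤ (((k:ℝ)+1)*τ - t) ^ (-γ) ∧ (((k:ℝ)+1)*τ - t) ^ (-γ) ≤ M := by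
      intro t ht
      have h1 : ((k:ℝ) - j) * τ ≤ ((k:ℝ)+1)*τ - t := by
        have := ht.2; rw [hb] at this; nlinarith
      have h2 : ((k:ℝ)+1)*τ - t ≤ ((k:ℝ) + 1 - j) * τ := by
        have := ht.1; rw [ha] at this; nlinarith
      constructor
      · exact Real.rpow_le_rpow_of_nonpos (by linarith) h2 (by linarith)
      · exact Real.rpow_le_rpow_of_nonpos hkj h1 (by linarith)
    have hcont : ContinuousOn (fun t => (((k:ℝ)+1)*τ - t) ^ (-γ)) (Set.Icc a b) := by
      apply ContinuousOn.rpow_const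
      · exact (continuous_const.sub continuous_id).continuousOn
      · intro t ht
        left
        have : ((k:ℝ) - j) * τ ≤ ((k:ℝ)+1)*τ - t := by
          have := ht.2; rw [hb] at this; nlinarith
        exact ne_of_gt (lt_of_lt_of_le hkj this)
    have hint : IntervalIntegrable (fun t => (((k:ℝ)+1)*τ - t) ^ (-γ)) volume a b := by
      apply ContinuousOn.intervalIntegrable
      rwa [Set.uIcc_of_le hab]
    -- bounds on the average
    have hIl : m * τ ≤ ∫ t in a..b, (((k:ℝ)+1)*τ - t) ^ (-γ) := by
      have h := intervalIntegral.integral_mono_on hab intervalIntegrable_const hint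
        (fun t ht => (hbound t ht).1)
      rwa [intervalIntegral.integral_const, show b - a = τ by rw [ha, hb]; ring,
        smul_eq_mul, mul_comm] at h
    have hIu : (∫ t in a..b, (((k:ℝ)+1)*τ - t) ^ (-γ)) ≤ τ * M := by
      have h := intervalIntegral.integral_mono_on hab hint intervalIntegrable_const
        (fun t ht => (hbound t ht).2)
      rwa [intervalIntegral.integral_const, show b - a = τ by rw [ha, hb]; ring,
        smul_eq_mul] at h
    have hψl : m ≤ ψbar j := by
      rw [hψbar j hj]
      calc m = τ⁻¹ * (m * τ) := by field_simp
        _ ≤ τ⁻¹ * ∫ t in a..b, (((k:ℝ)+1)*τ - t) ^ (-γ) :=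
            mul_le_mul_of_nonneg_left hIl (inv_pos.mpr hτ).le
    have hψu : ψbar j ≤ M := by
      rw [hψbar j hj]
      calc τ⁻¹ * (∫ t in a..b, (((k:ℝ)+1)*τ - t) ^ (-γ)) ≤ τ⁻¹ * (τ * M) :=
            mul_le_mul_of_nonneg_left hIu (inv_pos.mpr hτ).le
        _ = M := by field_simp
    have habs : ∀ t ∈ Set.Icc a b,
        |(((k:ℝ)+1)*τ - t) ^ (-γ) - ψbar j| ≤ M - m := by
      intro t ht
      have := hbound t ht
      rw [abs_sub_le_iff]
      constructor <;> linarith [this.1, this.2]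
    have hintabs : IntervalIntegrable
        (fun t => |(((k:ℝ)+1)*τ - t) ^ (-γ) - ψbar j|) volume a b := by
      apply ContinuousOn.intervalIntegrable
      rw [Set.uIcc_of_le hab]
      exact (hcont.sub continuousOn_const).abs
    calc (∫ t in a..b, |(((k:ℝ)+1)*τ - t) ^ (-γ) - ψbar j|)
        ≤ ∫ _t in a..b, (M - m) :=
          intervalIntegral.integral_mono_on hab hintabs intervalIntegrable_const habs
      _ = τ * (M - m) := by
          rw [intervalIntegral.integral_const, show b - a = τ by rw [ha, hb]; ring,
            smul_eq_mul]
  -- telescoping sum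
  set f : ℕ → ℝ := fun n => (((k:ℝ) + 1 - n) * τ) ^ (-γ) with hf
  have hsum : ∑ j ∈ Finset.range k,
      (∫ t in ((j : ℝ) * τ)..(((j : ℝ) + 1) * τ),
        |(((k : ℝ) + 1) * τ - t) ^ (-γ) - ψbar j|) ≤ τ ^ (1 - γ) := by
    calc ∑ j ∈ Finset.range k,
        (∫ t in ((j : ℝ) * τ)..(((j : ℝ) + 1) * τ),
          |(((k : ℝ) + 1) * τ - t) ^ (-γ) - ψbar j|)
        ≤ ∑ j ∈ Finset.range k,
            τ * ((((k:ℝ) - j) * τ) ^ (-γ) - (((k:ℝ) + 1 - j) * τ) ^ (-γ)) :=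
          Finset.sum_le_sum (fun j hj => key j (Finset.mem_range.mp hj))
      _ = τ * ∑ j ∈ Finset.range k, (f (j+1) - f j) := by
          rw [Finset.mul_sum]
          apply Finset.sum_congr rfl
          intro j _
          have : f (j+1) = (((k:ℝ) - j) * τ) ^ (-γ) := by
            rw [hf]
            push_cast
            ring_nf
          rw [this, hf]
      _ = τ * (f k - f 0) := by rw [Finset.sum_range_sub f]
      _ ≤ τ * τ ^ (-γ) := by
          have hfk : f k = τ ^ (-γ) := by
            rw [hf]; simp
          have hf0 : 0 ≤ f 0 := by
            rw [hf]; exact Real.rpow_nonneg (by simp; positivity) _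
          nlinarith [hτ]
      _ = τ ^ (1 - γ) := by
          rw [show (1:ℝ) - γ = 1 + (-γ) by ring, Real.rpow_add hτ, Real.rpow_one]
  rw [Finset.sum_range_succ, hlast]
  have hpos : 0 < τ ^ (1 - γ) := Real.rpow_pos_of_pos hτ _
  have heq : (2 - γ) / (1 - γ) * τ ^ (1 - γ)
      = τ ^ (1 - γ) + τ ^ (1 - γ) / (1 - γ) := by
    field_simp
    ring
  linarith
end

section
/- Let γ ∈ (0,1), τ > 0, k ∈ ℕ, and set t_j = jτ for j = 0, …, k+1. Define ψ(t) = (t_{k+1} - t)^{-γ} for t < t_{k+1} and, for 0 ≤ j ≤ k-1, ψ̄_j = τ^{-1} ∫_{t_j}^{t_{j+1}} ψ(t) dt. Then for every j with 0 ≤ j < k: ∫_{t_j}^{t_{j+1}} |ψ(t) - ψ̄_j| dt ≤ τ^{1-γ} ( (k-j)^{-γ} - (k-j+1)^{-γ} ). -/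
open MeasureTheory Real Set

/-- Per-interval kernel estimate: for `j < k`, the `L¹`-distance on `I_j` between the
Caputo kernel `ψ(t) = (t_{k+1} - t)^{-γ}` and its average over `I_j` is bounded by
`τ^{1-γ} ((k-j)^{-γ} - (k-j+1)^{-γ})`. -/
theorem caputo_kernel_interval_estimate
    (γ τ : ℝ) (hγ : γ ∈ Set.Ioo (0 : ℝ) 1) (hτ : 0 < τ) (k : ℕ)
    (ψbar : ℕ → ℝ)
    (hψbar : ∀ j < k, ψbar j =
      τ⁻¹ * ∫ t in ((j : ℝ) * τ)..(((j : ℝ) + 1) * τ),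
        (((k : ℝ) + 1) * τ - t) ^ (-γ)) :
    ∀ j < k,
      (∫ t in ((j : ℝ) * τ)..(((j : ℝ) + 1) * τ),
          |(((k : ℝ) + 1) * τ - t) ^ (-γ) - ψbar j|)
        ≤ τ ^ (1 - γ) *
            (((k : ℝ) - (j : ℝ)) ^ (-γ) - ((k : ℝ) - (j : ℝ) + 1) ^ (-γ)) := by
  intro j hj
  obtain ⟨hγ0, hγ1⟩ := hγ
  set a : ℝ := (j : ℝ) * τ with ha
  set b : ℝ := ((j : ℝ) + 1) * τ with hb
  have hab : a ≤ b := by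
    have hjj : (j : ℝ) ≤ (j : ℝ) + 1 := by linarith
    exact mul_le_mul_of_nonneg_right hjj hτ.le
  have hjk : (j : ℝ) + 1 ≤ (k : ℝ) := by exact_mod_cast Nat.succ_le_of_lt hj
  have hd0 : (0 : ℝ) < (k : ℝ) - j := by linarith
  have hd1 : (0 : ℝ) < (k : ℝ) - j + 1 := by linarith
  set f : ℝ → ℝ := fun t => (((k : ℝ) + 1) * τ - t) ^ (-γ) with hf
  set m : ℝ := (((k : ℝ) - j + 1) * τ) ^ (-γ) with hm
  set M : ℝ := (((k : ℝ) - j) * τ) ^ (-γ) with hM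
  have hpos : ∀ t ∈ Set.Icc a b, 0 < ((k : ℝ) + 1) * τ - t := by
    intro t ht
    have h1 : t ≤ b := ht.2
    nlinarith [ht.1]
  have hcont : ContinuousOn f (Set.Icc a b) := by
    apply ContinuousOn.rpow_const
    · exact (continuous_const.sub continuous_id).continuousOn
    · intro t ht; exact Or.inl (ne_of_gt (hpos t ht))
  have hint : IntervalIntegrable f MeasureTheory.volume a b :=
    hcont.intervalIntegrable_of_Icc hab
  have hbound : ∀ t ∈ Set.Icc a b, m ≤ f t ∧ f t ≤ M := by
    intro t ht
    constructor
    · apply Real.rpow_le_rpow_of_nonpos (hpos t ht) _ (by linarith)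
      have : a ≤ t := ht.1
      nlinarith
    · apply Real.rpow_le_rpow_of_nonpos (by positivity) _ (by linarith)
      have : t ≤ b := ht.2
      nlinarith
  have hba : b - a = τ := by rw [ha, hb]; ring
  have hIl : τ * m ≤ ∫ t in a..b, f t := by
    have := intervalIntegral.integral_mono_on hab intervalIntegrable_const hint
      (fun t ht => (hbound t ht).1)
    simpa [hba] using this
  have hIu : (∫ t in a..b, f t) ≤ τ * M := by
    have := intervalIntegral.integral_mono_on hab hint intervalIntegrable_const
      (fun t ht => (hbound t ht).2)
    simpa [hba] using this
  have hψ := hψbar j hj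
  have hψl : m ≤ ψbar j := by
    rw [hψ]
    show m ≤ τ⁻¹ * ∫ t in a..b, f t
    have h2 : τ⁻¹ * (τ * m) ≤ τ⁻¹ * ∫ t in a..b, f t :=
      mul_le_mul_of_nonneg_left hIl (by positivity)
    calc m = τ⁻¹ * (τ * m) := by field_simp
    _ ≤ _ := h2
  have hψu : ψbar j ≤ M := by
    rw [hψ]
    show τ⁻¹ * (∫ t in a..b, f t) ≤ M
    have h2 : τ⁻¹ * (∫ t in a..b, f t) ≤ τ⁻¹ * (τ * M) :=
      mul_le_mul_of_nonneg_left hIu (by positivity)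
    calc τ⁻¹ * (∫ t in a..b, f t) ≤ τ⁻¹ * (τ * M) := h2
    _ = M := by field_simp
  have hptw : ∀ t ∈ Set.Icc a b, |f t - ψbar j| ≤ M - m := by
    intro t ht
    obtain ⟨h1, h2⟩ := hbound t ht
    rw [abs_le]
    constructor <;> linarith
  have habsint : IntervalIntegrable (fun t => |f t - ψbar j|) MeasureTheory.volume a b :=
    (hint.sub intervalIntegrable_const).abs
  have hmain : (∫ t in a..b, |f t - ψbar j|) ≤ τ * (M - m) := by
    have := intervalIntegral.integral_mono_on hab habsint intervalIntegrable_const hptw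
    simp only [intervalIntegral.integral_const, smul_eq_mul, hba] at this
    linarith
  have hMval : M = τ ^ (-γ) * ((k : ℝ) - j) ^ (-γ) := by
    rw [hM, Real.mul_rpow hd0.le hτ.le, mul_comm]
  have hmval : m = τ ^ (-γ) * ((k : ℝ) - j + 1) ^ (-γ) := by
    rw [hm, Real.mul_rpow hd1.le hτ.le, mul_comm]
  have hfinal : τ * (M - m)
      = τ ^ (1 - γ) * (((k : ℝ) - j) ^ (-γ) - ((k : ℝ) - j + 1) ^ (-γ)) := by
    rw [hMval, hmval]
    have : τ ^ (1 - γ) = τ * τ ^ (-γ) := by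
      rw [sub_eq_add_neg, Real.rpow_add hτ, Real.rpow_one]
    rw [this]; ring
  calc (∫ t in a..b, |f t - ψbar j|) ≤ τ * (M - m) := hmain
  _ = _ := hfinal
end

section
/- Let γ ∈ (0,1) and λ > 0. For every t > 0, the function s ↦ E_{γ,1}(-λ s^γ) is differentiable at t with derivative equal to -λ t^{γ-1} E_{γ,γ}(-λ t^γ), where E_{γ,μ} denotes the Mittag-Leffler function. -/
open MeasureTheory Real Set

lemma gamma_lb {A x : ℝ} (hA : 1 ≤ A) (hx : 1 ≤ x) :
    A ^ (x - 1) * Real.exp (-(A + 1)) ≤ Real.Gamma x := by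
  have hx0 : (0:ℝ) < x := lt_of_lt_of_le one_pos hx
  have hA0 : (0:ℝ) < A := lt_of_lt_of_le one_pos hA
  rw [Real.Gamma_eq_integral hx0]
  have hint : IntegrableOn (fun u : ℝ => Real.exp (-u) * u ^ (x - 1)) (Ioi 0) :=
    Real.GammaIntegral_convergent hx0
  have hsub : Ioc A (A + 1) ⊆ Ioi (0:ℝ) := fun u hu =>
    lt_trans hA0 hu.1
  have step1 : ∫ u in Ioc A (A+1), Real.exp (-u) * u ^ (x-1) ≤
      ∫ u in Ioi (0:ℝ), Real.exp (-u) * u ^ (x-1) := by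
    apply setIntegral_mono_set hint
    · filter_upwards [ae_restrict_mem measurableSet_Ioi] with u hu
      have : (0:ℝ) < u := hu
      positivity
    · exact Filter.Eventually.of_forall hsub
  refine le_trans ?_ step1
  have key : (A ^ (x-1) * Real.exp (-(A+1))) * (volume (Ioc A (A+1))).toReal ≤
      ∫ u in Ioc A (A+1), Real.exp (-u) * u ^ (x-1) := by
    apply setIntegral_ge_of_const_le_real measurableSet_Ioc
    · simp [Real.volume_Ioc]
    · intro u hu
      have h1 : Real.exp (-(A+1)) ≤ Real.exp (-u) :=
        Real.exp_le_exp.2 (by linarith [hu.2])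
      have h2 : A ^ (x-1) ≤ u ^ (x-1) :=
        Real.rpow_le_rpow hA0.le hu.1.le (by linarith)
      calc A ^ (x-1) * Real.exp (-(A+1)) ≤ u ^ (x-1) * Real.exp (-u) := by
            exact mul_le_mul h2 h1 (Real.exp_pos _).le
              (Real.rpow_nonneg (by linarith [hu.1]) _)
        _ = Real.exp (-u) * u ^ (x-1) := by ring
    · exact hint.mono_set hsub
  have : (volume (Ioc A (A+1))).toReal = 1 := by
    rw [Real.volume_Ioc]; norm_num
  rw [this, mul_one] at key
  exact key

set_option maxHeartbeats 1000000 in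
lemma summable_pow_div_gamma {x c b : ℝ} (hx : 0 ≤ x) (hc : 0 < c) (hb : 0 < b) :
    Summable (fun k : ℕ => x ^ k / Real.Gamma (c * k + b)) := by
  set A : ℝ := (2*x+1) ^ (1/c) with hAdef
  have h2x : (1:ℝ) ≤ 2*x+1 := by linarith
  have hA1 : 1 ≤ A := Real.one_le_rpow h2x (by positivity)
  have hA0 : (0:ℝ) < A := lt_of_lt_of_le one_pos hA1
  have hAc : A ^ c = 2*x+1 := by
    rw [hAdef, ← Real.rpow_mul (by linarith), one_div_mul_cancel hc.ne', Real.rpow_one]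
  set k₀ : ℕ := ⌈1/c⌉₊ with hk0
  have hck0 : 1 ≤ c * k₀ := by
    have h1 : (1/c : ℝ) ≤ k₀ := Nat.le_ceil _
    calc (1:ℝ) = c * (1/c) := by field_simp
      _ ≤ c * k₀ := by apply mul_le_mul_of_nonneg_left h1 hc.le
  rw [← summable_nat_add_iff k₀]
  set b' : ℝ := c * k₀ + b with hb'
  have hb'1 : 1 ≤ b' := by linarith
  set E : ℝ := A ^ (b' - 1) * Real.exp (-(A+1)) with hE
  have hEpos : 0 < E := by positivity
  set C : ℝ := x ^ k₀ / E with hC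
  set r : ℝ := x / (2*x+1) with hr
  have hr0 : 0 ≤ r := by positivity
  have hr1 : r < 1 := by
    rw [hr, div_lt_one (by linarith)]; linarith
  apply Summable.of_nonneg_of_le (f := fun n => C * r ^ n)
  · intro n
    have : 0 < Real.Gamma (c * ↑(n + k₀) + b) :=
      Real.Gamma_pos_of_pos (by positivity)
    positivity
  · intro n
    have harg : c * ↑(n + k₀) + b = c * n + b' := by push_cast; ring
    have h1 : 1 ≤ c * (n:ℝ) + b' := by
      have : (0:ℝ) ≤ c * n := by positivity
      linarith
    have hL : A ^ (c * n + b' - 1) * Real.exp (-(A+1)) ≤ Real.Gamma (c * n + b') :=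
      gamma_lb hA1 h1
    have hLpos : 0 < A ^ (c * n + b' - 1) * Real.exp (-(A+1)) := by positivity
    have e1 : A ^ (c * (n:ℝ) + b' - 1) = (2*x+1) ^ n * A ^ (b' - 1) := by
      rw [show c * (n:ℝ) + b' - 1 = c * (n:ℝ) + (b' - 1) by ring,
        Real.rpow_add hA0, Real.rpow_mul hA0.le c (n:ℝ), hAc, Real.rpow_natCast]
    calc x ^ (n + k₀) / Real.Gamma (c * ↑(n + k₀) + b)
        ≤ x ^ (n + k₀) / (A ^ (c * n + b' - 1) * Real.exp (-(A+1))) := by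
          rw [harg]
          exact div_le_div_of_nonneg_left (by positivity) hLpos hL
      _ = C * r ^ n := by
          rw [e1, hC, hr, hE, pow_add, div_pow]
          have h2x0 : (0:ℝ) < 2*x+1 := by linarith
          have hAb : (0:ℝ) < A ^ (b'-1) := by positivity
          field_simp
  · exact (summable_geometric_of_lt_one hr0 hr1).mul_left C

/-- The Mittag-Leffler function `E_{γ,μ}(z) = Σ_{k=0}^∞ z^k / Γ(γk + μ)`. -/
noncomputable def mittagLeffler (γ μ : ℝ) (z : ℝ) : ℝ :=
  ∑' k : ℕ, z ^ k / Real.Gamma (γ * k + μ)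

/-- The derivative of `t ↦ E_{γ,1}(-λ t^γ)` at `t > 0` is
`-λ t^{γ-1} E_{γ,γ}(-λ t^γ)`. -/
theorem mittagLeffler_hasDerivAt
    (γ lam : ℝ) (hγ : γ ∈ Set.Ioo (0 : ℝ) 1) (hlam : 0 < lam)
    (t : ℝ) (ht : 0 < t) :
    HasDerivAt (fun s : ℝ => mittagLeffler γ 1 (-lam * s ^ γ))
      (-lam * t ^ (γ - 1) * mittagLeffler γ γ (-lam * t ^ γ)) t := by
  obtain ⟨hγ0, hγ1⟩ := hγ
  set S : Set ℝ := Ioo (t/2) (2*t) with hS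
  have htS : t ∈ S := ⟨by linarith, by linarith⟩
  have hSpos : ∀ s ∈ S, (0:ℝ) < s := fun s hs => lt_trans (by linarith) hs.1
  set g : ℕ → ℝ → ℝ := fun k s => (-lam * s ^ γ) ^ k / Real.Gamma (γ * k + 1) with hg
  set g' : ℕ → ℝ → ℝ := fun k s =>
    (k:ℝ) * (-lam * s ^ γ) ^ (k-1) * (-lam * (γ * s ^ (γ-1))) / Real.Gamma (γ * k + 1)
    with hg'
  have h2t : (0:ℝ) < (2*t) ^ γ := Real.rpow_pos_of_pos (by linarith) _
  have ht2 : (0:ℝ) < (t/2) ^ (γ-1) := Real.rpow_pos_of_pos (by linarith) _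
  have hΓpos : ∀ k : ℕ, 0 < Real.Gamma (γ * k + 1) := fun k =>
    Real.Gamma_pos_of_pos (by positivity)
  set u : ℕ → ℝ := fun k => (k:ℝ) * (lam * (2*t) ^ γ) ^ (k-1) *
    (lam * (γ * (t/2) ^ (γ-1))) / Real.Gamma (γ * k + 1) with hu
  -- summability of the bound
  have husum : Summable u := by
    rw [hu]
    have hm1 : (1:ℝ) ≤ max (lam * (2*t) ^ γ) 1 := le_max_right _ _
    have hm0 : (0:ℝ) ≤ max (lam * (2*t) ^ γ) 1 := by linarith
    apply Summable.of_nonneg_of_le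
      (f := fun k : ℕ => (lam * (γ * (t/2) ^ (γ-1))) *
        ((2 * max (lam * (2*t) ^ γ) 1) ^ k / Real.Gamma (γ * k + 1)))
    · intro k
      have := hΓpos k
      positivity
    · intro k
      have h1 : (k:ℝ) * (lam * (2*t) ^ γ) ^ (k-1)
          ≤ 2 ^ k * (max (lam * (2*t) ^ γ) 1) ^ k := by
        have hk2 : (k:ℝ) ≤ 2 ^ k := by exact_mod_cast (Nat.lt_two_pow_self (n := k)).le
        have hyk : (lam * (2*t) ^ γ) ^ (k-1) ≤ (max (lam * (2*t) ^ γ) 1) ^ k :=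
          le_trans (pow_le_pow_left₀ (by positivity) (le_max_left _ _) _)
            (pow_le_pow_right₀ hm1 (Nat.sub_le _ _))
        exact mul_le_mul hk2 hyk (by positivity) (by positivity)
      calc (k:ℝ) * (lam * (2*t) ^ γ) ^ (k-1) * (lam * (γ * (t/2) ^ (γ-1)))
            / Real.Gamma (γ * k + 1)
          ≤ 2 ^ k * (max (lam * (2*t) ^ γ) 1) ^ k * (lam * (γ * (t/2) ^ (γ-1)))
            / Real.Gamma (γ * k + 1) := by gcongr
        _ = (lam * (γ * (t/2) ^ (γ-1))) *
            ((2 * max (lam * (2*t) ^ γ) 1) ^ k / Real.Gamma (γ * k + 1)) := by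
            rw [mul_pow]; ring
    · exact (summable_pow_div_gamma (by positivity) hγ0 one_pos).mul_left _
  -- termwise derivatives
  have hderiv : ∀ k : ℕ, ∀ s ∈ S, HasDerivAt (g k) (g' k s) s := by
    intro k s hs
    have hs0 := hSpos s hs
    have h1 : HasDerivAt (fun s : ℝ => s ^ γ) (γ * s ^ (γ-1)) s :=
      Real.hasDerivAt_rpow_const (Or.inl hs0.ne')
    have h2 : HasDerivAt (fun s : ℝ => -lam * s ^ γ) (-lam * (γ * s ^ (γ-1))) s :=
      h1.const_mul (-lam)
    exact (h2.pow k).div_const _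
  -- bound on derivatives
  have hbound : ∀ k : ℕ, ∀ s ∈ S, ‖g' k s‖ ≤ u k := by
    intro k s hs
    have hs0 := hSpos s hs
    have hsγ : 0 < s ^ γ := Real.rpow_pos_of_pos hs0 _
    have hsγ1 : 0 < s ^ (γ-1) := Real.rpow_pos_of_pos hs0 _
    have habs : ‖g' k s‖ =
        (k:ℝ) * (lam * s ^ γ) ^ (k-1) * (lam * (γ * s ^ (γ-1))) / Real.Gamma (γ * k + 1) := by
      rw [hg']
      rw [Real.norm_eq_abs, abs_div, abs_of_pos (hΓpos k), abs_mul, abs_mul,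
        Nat.abs_cast, abs_pow, abs_mul, abs_neg, abs_of_pos hlam,
        abs_of_pos hsγ, abs_mul, abs_neg, abs_of_pos hlam,
        abs_of_pos (by positivity : (0:ℝ) < γ * s ^ (γ-1))]
    simp only [habs, hu]
    have e1 : s ^ γ ≤ (2*t) ^ γ :=
      Real.rpow_le_rpow hs0.le hs.2.le hγ0.le
    have e2 : s ^ (γ-1) ≤ (t/2) ^ (γ-1) :=
      Real.rpow_le_rpow_of_nonpos (by linarith) hs.1.le (by linarith)
    gcongr
  -- summability at the point t
  have hsum0 : Summable (fun k => g k t) := by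
    apply Summable.of_abs
    apply ((summable_pow_div_gamma (x := lam * t ^ γ) (by positivity) hγ0 one_pos).congr ?_)
    intro k
    rw [hg]
    rw [abs_div, abs_of_pos (hΓpos k), abs_pow, abs_mul, abs_neg, abs_of_pos hlam,
      abs_of_pos (Real.rpow_pos_of_pos ht γ)]
  -- summability of derivative series at t
  have hsum' : Summable (fun k => g' k t) := by
    apply Summable.of_abs
    apply husum.of_nonneg_of_le (fun k => abs_nonneg _)
    intro k
    exact (Real.norm_eq_abs _ ▸ hbound k t htS : |g' k t| ≤ u k)
  have key : HasDerivAt (fun z => ∑' n : ℕ, g n z) (∑' n : ℕ, g' n t) t :=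
    hasDerivAt_tsum_of_isPreconnected husum isOpen_Ioo
    (isPreconnected_Ioo) hderiv hbound htS hsum0 htS
  simp only [mittagLeffler]
  convert key using 1
  -- identify the sum of derivatives
  rw [Summable.tsum_eq_zero_add hsum']
  have h0 : g' 0 t = 0 := by
    rw [hg']; norm_num
  rw [h0, zero_add, ← tsum_mul_left]
  apply tsum_congr
  intro j
  have hΓγ : 0 < Real.Gamma (γ * j + γ) := Real.Gamma_pos_of_pos (by positivity)
  have hcast : γ * ((j:ℕ)+1 : ℕ) = γ * j + γ := by push_cast; ring
  have hrec : Real.Gamma (γ * ((j:ℕ)+1 : ℕ) + 1) = (γ * j + γ) * Real.Gamma (γ * j + γ) := by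
    rw [hcast, Real.Gamma_add_one (by positivity)]
  rw [hg']
  simp only [Nat.add_sub_cancel]
  rw [hrec]
  have hjγ : γ * (j:ℝ) + γ ≠ 0 := by positivity
  push_cast
  field_simp
end

section
/- Let γ ∈ (0,1), λ > 0, T > 0, and let f : [0,T] → ℝ be continuously differentiable. Define u(t) = ∫_0^t r^{γ-1} E_{γ,γ}(-λ r^γ) f(t-r) dr, where E_{γ,γ} is the Mittag-Leffler function. Then u is differentiable on (0,T) and for every t ∈ (0,T): u'(t) = t^{γ-1} E_{γ,γ}(-λ t^γ) f(0) + ∫_0^t r^{γ-1} E_{γ,γ}(-λ r^γ) f'(t-r) dr. -/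
open MeasureTheory Real Set

private lemma gamma_aux {γ x : ℝ} (hγ0 : 0 < γ) (hγ1 : γ < 1) (hx : 1 ≤ x) :
    x * Real.Gamma x ≤ Real.Gamma (x + γ) * (x + γ) ^ (1 - γ) := by
  have hx0 : (0:ℝ) < x := lt_of_lt_of_le one_pos hx
  have hxγ : (0:ℝ) < x + γ := by linarith
  have hΓx : 0 < Real.Gamma x := Real.Gamma_pos_of_pos hx0
  have hΓxγ : 0 < Real.Gamma (x + γ) := Real.Gamma_pos_of_pos hxγ
  have hcv := Real.convexOn_log_Gamma.2 (mem_Ioi.2 hxγ)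
    (mem_Ioi.2 (by linarith : (0:ℝ) < x + γ + 1)) hγ0.le
    (by linarith : (0:ℝ) ≤ 1 - γ) (by ring)
  simp only [Function.comp_apply, smul_eq_mul] at hcv
  have harg : γ * (x + γ) + (1 - γ) * (x + γ + 1) = x + 1 := by ring
  rw [harg, Real.Gamma_add_one hx0.ne'] at hcv
  have h2 : x + γ + 1 = (x + γ) + 1 := by ring
  rw [h2, Real.Gamma_add_one hxγ.ne'] at hcv
  rw [Real.log_mul hx0.ne' hΓx.ne', Real.log_mul hxγ.ne' hΓxγ.ne'] at hcv
  have hlog : Real.log (x * Real.Gamma x)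
      ≤ Real.log (Real.Gamma (x + γ) * (x + γ) ^ (1 - γ)) := by
    rw [Real.log_mul hx0.ne' hΓx.ne',
      Real.log_mul hΓxγ.ne' (Real.rpow_pos_of_pos hxγ _).ne', Real.log_rpow hxγ]
    linarith
  have h := Real.exp_le_exp.2 hlog
  rwa [Real.exp_log (mul_pos hx0 hΓx),
    Real.exp_log (mul_pos hΓxγ (Real.rpow_pos_of_pos hxγ _))] at h

private lemma ml_summable {γ : ℝ} (C : ℝ) (hγ0 : 0 < γ) (hγ1 : γ < 1) (hC : 0 ≤ C) :
    Summable (fun k : ℕ => C ^ k / Real.Gamma (γ * k + γ)) := by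
  apply summable_of_ratio_norm_eventually_le (r := 1/2) (by norm_num : (1:ℝ)/2 < 1)
  obtain ⟨N, hN⟩ := exists_nat_ge ((max 1 ((4*C) ^ (1/γ)) - γ) / γ)
  filter_upwards [Filter.eventually_ge_atTop N] with k hk
  have hkN : ((N:ℝ)) ≤ (k:ℝ) := Nat.cast_le.2 hk
  set x : ℝ := γ * k + γ with hxdef
  have hx1 : max 1 ((4*C) ^ (1/γ)) ≤ x := by
    have h1 : (max 1 ((4*C) ^ (1/γ)) - γ) / γ ≤ (k:ℝ) := le_trans hN hkN
    have h2 := (div_le_iff₀ hγ0).1 h1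
    rw [hxdef]; nlinarith [h2]
  have hx : 1 ≤ x := le_trans (le_max_left _ _) hx1
  have hx0 : (0:ℝ) < x := lt_of_lt_of_le one_pos hx
  have hxγpos : (0:ℝ) < x + γ := by linarith
  have hΓx : 0 < Real.Gamma x := Real.Gamma_pos_of_pos hx0
  have hΓxγ : 0 < Real.Gamma (x + γ) := Real.Gamma_pos_of_pos hxγpos
  have hpow : (0:ℝ) < x ^ (1 - γ) := Real.rpow_pos_of_pos hx0 _
  have hxC : 4 * C ≤ x ^ γ := by
    have h4 : (4*C) ^ (1/γ) ≤ x := le_trans (le_max_right _ _) hx1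
    have h5 : ((4*C) ^ (1/γ)) ^ γ ≤ x ^ γ :=
      Real.rpow_le_rpow (Real.rpow_nonneg (by linarith) _) h4 hγ0.le
    rwa [← Real.rpow_mul (by linarith : (0:ℝ) ≤ 4*C), one_div,
      inv_mul_cancel₀ hγ0.ne', Real.rpow_one] at h5
  have hgrow := gamma_aux hγ0 hγ1 hx
  have hb1 : (x+γ) ^ (1-γ) ≤ 2 * x ^ (1-γ) := by
    calc (x+γ) ^ (1-γ) ≤ (2*x) ^ (1-γ) :=
          Real.rpow_le_rpow hxγpos.le (by linarith) (by linarith)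
      _ = 2 ^ (1-γ) * x ^ (1-γ) := Real.mul_rpow (by norm_num) hx0.le
      _ ≤ 2 * x ^ (1-γ) := by
          have h2 : (2:ℝ) ^ (1-γ) ≤ 2 ^ (1:ℝ) :=
            Real.rpow_le_rpow_of_exponent_le (by norm_num) (by linarith)
          rw [Real.rpow_one] at h2
          exact mul_le_mul_of_nonneg_right h2 hpow.le
  have hxx : x ^ γ * x ^ (1-γ) = x := by
    rw [← Real.rpow_add hx0]; norm_num
  have h5 : x * Real.Gamma x ≤ Real.Gamma (x+γ) * (2 * x ^ (1-γ)) :=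
    hgrow.trans (mul_le_mul_of_nonneg_left hb1 hΓxγ.le)
  have h6 : (4*C) * x ^ (1-γ) ≤ x := by nlinarith [hxC, hpow]
  have h7 : (4*C*Real.Gamma x) * x ^ (1-γ) ≤ (2*Real.Gamma (x+γ)) * x ^ (1-γ) := by
    nlinarith [h5, h6, hΓx]
  have hkey : 2*C*Real.Gamma x ≤ Real.Gamma (x+γ) := by
    have := le_of_mul_le_mul_right h7 hpow
    linarith
  have hxk : γ * ((k:ℝ)+1) + γ = x + γ := by rw [hxdef]; ring
  push_cast
  rw [hxk]
  rw [Real.norm_eq_abs, Real.norm_eq_abs,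
    abs_of_nonneg (div_nonneg (pow_nonneg hC _) hΓxγ.le),
    abs_of_nonneg (div_nonneg (pow_nonneg hC _) hΓx.le),
    ← mul_div_assoc, div_le_div_iff₀ hΓxγ hΓx, pow_succ]
  have h8 : C ^ k * (2*C*Real.Gamma x) ≤ C ^ k * Real.Gamma (x+γ) :=
    mul_le_mul_of_nonneg_left hkey (pow_nonneg hC k)
  nlinarith [h8]

/-- Differentiability of the Duhamel representation
`u(t) = ∫_0^t r^{γ-1} E_{γ,γ}(-λr^γ) f(t-r) dr` of the solution of the scalar Caputo
problem `∂_t^γ u + λ u = f`, `u(0) = 0`, together with the formula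
`u'(t) = t^{γ-1} E_{γ,γ}(-λt^γ) f(0) + ∫_0^t r^{γ-1} E_{γ,γ}(-λr^γ) f'(t-r) dr`. -/
theorem duhamel_hasDerivAt
    (γ lam T : ℝ) (hγ : γ ∈ Set.Ioo (0 : ℝ) 1) (hlam : 0 < lam) (hT : 0 < T)
    (f f' : ℝ → ℝ)
    (hf : ∀ t ∈ Set.Icc (0 : ℝ) T, HasDerivAt f (f' t) t)
    (hf' : ContinuousOn f' (Set.Icc 0 T)) :
    ∀ t ∈ Set.Ioo (0 : ℝ) T,
      HasDerivAt
        (fun s : ℝ =>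
          ∫ r in (0 : ℝ)..s, r ^ (γ - 1) * mittagLeffler γ γ (-(lam * r ^ γ)) * f (s - r))
        (t ^ (γ - 1) * mittagLeffler γ γ (-(lam * t ^ γ)) * f 0 +
          ∫ r in (0 : ℝ)..t, r ^ (γ - 1) * mittagLeffler γ γ (-(lam * r ^ γ)) * f' (t - r))
        t := by
  obtain ⟨hγ0, hγ1⟩ := hγ
  intro t ht
  obtain ⟨ht0, htT⟩ := ht
  -- continuity of the Mittag-Leffler composite
  have hsum := ml_summable (lam * T ^ γ) hγ0 hγ1
    (mul_nonneg hlam.le (Real.rpow_nonneg hT.le _))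
  have hφ : ContinuousOn (fun r : ℝ => mittagLeffler γ γ (-(lam * r ^ γ))) (Icc 0 T) := by
    have hc : Continuous (fun r : ℝ => -(lam * r ^ γ)) := by
      apply Continuous.neg
      exact continuous_const.mul (continuous_iff_continuousAt.2 fun x =>
        Real.continuousAt_rpow_const x γ (Or.inr hγ0.le))
    show ContinuousOn
      (fun r : ℝ => ∑' k : ℕ, (-(lam * r ^ γ)) ^ k / Real.Gamma (γ * k + γ)) (Icc 0 T)
    apply continuousOn_tsum (u := fun k : ℕ => (lam * T ^ γ) ^ k / Real.Gamma (γ * k + γ))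
    · intro k
      exact ((hc.pow k).div_const _).continuousOn
    · exact hsum
    · intro k r hr
      have hΓ : 0 < Real.Gamma (γ * k + γ) := Real.Gamma_pos_of_pos
        (by have := mul_nonneg hγ0.le (Nat.cast_nonneg (α := ℝ) k); linarith)
      have h0 : (0:ℝ) ≤ lam * r ^ γ := mul_nonneg hlam.le (Real.rpow_nonneg hr.1 _)
      have hle : lam * r ^ γ ≤ lam * T ^ γ :=
        mul_le_mul_of_nonneg_left (Real.rpow_le_rpow hr.1 hr.2 hγ0.le) hlam.le
      rw [norm_div, norm_pow, norm_neg, Real.norm_eq_abs, Real.norm_eq_abs,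
        abs_of_pos hΓ, abs_of_nonneg h0]
      exact (div_le_div_iff_of_pos_right hΓ).2 (pow_le_pow_left₀ h0 hle k)
  -- the singular kernel
  set g : ℝ → ℝ := fun r => r ^ (γ - 1) * mittagLeffler γ γ (-(lam * r ^ γ)) with hgdef
  have hgat : ∀ x ∈ Ioo (0:ℝ) T, ContinuousAt g x := by
    intro x hx
    exact (Real.continuousAt_rpow_const x (γ-1) (Or.inl hx.1.ne')).mul
      (hφ.continuousAt (Icc_mem_nhds hx.1 hx.2))
  have hgon : ∀ {S : Set ℝ}, S ⊆ Ioo (0:ℝ) T → ContinuousOn g S :=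
    fun hS x hx => (hgat x (hS hx)).continuousWithinAt
  have hgint : ∀ s ∈ Icc (0:ℝ) T, IntervalIntegrable g volume 0 s := by
    intro s hs
    apply (intervalIntegral.intervalIntegrable_rpow' (by linarith : (-1:ℝ) < γ - 1)).mul_continuousOn
    rw [uIcc_of_le hs.1]
    exact hφ.mono (Icc_subset_Icc le_rfl hs.2)
  -- the globally C¹ extension F of f
  set cl : ℝ → ℝ := fun x => max 0 (min x T) with hcldef
  have hclcont : Continuous cl := continuous_const.max (continuous_id.min continuous_const)
  have hclmem : ∀ x, cl x ∈ Icc (0:ℝ) T := fun x =>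
    ⟨le_max_left _ _, max_le hT.le (min_le_right x T)⟩
  have hcleq : ∀ x ∈ Icc (0:ℝ) T, cl x = x := fun x hx => by
    simp only [hcldef]; rw [min_eq_left hx.2, max_eq_right hx.1]
  set fc : ℝ → ℝ := fun x => f' (cl x) with hfcdef
  have hfccont : Continuous fc := hf'.comp_continuous hclcont hclmem
  obtain ⟨M₀, hM₀⟩ := isCompact_Icc.exists_bound_of_continuousOn hf'
  set M : ℝ := max M₀ 0 with hMdef
  have hM0 : 0 ≤ M := le_max_right _ _
  have hM : ∀ x, |fc x| ≤ M := fun x =>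
    le_trans (by simpa using hM₀ (cl x) (hclmem x)) (le_max_left _ _)
  set F : ℝ → ℝ := fun x => f 0 + ∫ τ in (0:ℝ)..x, fc τ with hFdef
  have hF : ∀ x : ℝ, HasDerivAt F (fc x) x := by
    intro x
    apply HasDerivAt.const_add
    exact intervalIntegral.integral_hasDerivAt_right (hfccont.intervalIntegrable _ _)
      (ContinuousOn.stronglyMeasurableAtFilter isOpen_univ hfccont.continuousOn x (mem_univ x))
      hfccont.continuousAt
  have hFc : Continuous F := continuous_iff_continuousAt.2 fun x => (hF x).continuousAt
  have hFlip : ∀ x : ℝ, |F x - F 0| ≤ M * |x| := by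
    intro x
    have hFsub : F x - F 0 = ∫ τ in (0:ℝ)..x, fc τ := by simp [hFdef]
    rw [hFsub]
    have h := intervalIntegral.norm_integral_le_of_norm_le_const
      (C := M) (f := fc) (a := (0:ℝ)) (b := x) (fun y _ => by simpa using hM y)
    simpa using h
  have hFf : ∀ x ∈ Icc (0:ℝ) T, F x = f x := by
    intro x hx
    have h1 : ∫ τ in (0:ℝ)..x, fc τ = ∫ τ in (0:ℝ)..x, f' τ := by
      apply intervalIntegral.integral_congr
      intro τ hτ
      rw [uIcc_of_le hx.1] at hτ
      show fc τ = f' τ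
      simp only [hfcdef]
      rw [hcleq τ ⟨hτ.1, le_trans hτ.2 hx.2⟩]
    have h2 : ∫ τ in (0:ℝ)..x, f' τ = f x - f 0 := by
      apply intervalIntegral.integral_eq_sub_of_hasDerivAt
      · intro τ hτ
        rw [uIcc_of_le hx.1] at hτ
        exact hf τ ⟨hτ.1, le_trans hτ.2 hx.2⟩
      · exact (hf'.mono (by rw [uIcc_of_le hx.1]; exact Icc_subset_Icc le_rfl hx.2)).intervalIntegrable
    simp only [hFdef]
    rw [h1, h2]; ring
  -- a window around t
  set δ : ℝ := min t (T - t) / 2 with hδdef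
  have hδ0 : 0 < δ := by
    have h : 0 < min t (T - t) := lt_min ht0 (by linarith)
    rw [hδdef]; linarith
  have hδt : δ < t := by
    have h1 : min t (T - t) ≤ t := min_le_left _ _
    rw [hδdef]; linarith
  have hδT : t + δ < T := by
    have h1 : min t (T - t) ≤ T - t := min_le_right _ _
    rw [hδdef]; linarith
  have hsubIcc : Icc (t - δ) (t + δ) ⊆ Ioo (0:ℝ) T := fun x hx =>
    ⟨by linarith [hx.1], by linarith [hx.2]⟩
  obtain ⟨K₀, hK₀⟩ := isCompact_Icc.exists_bound_of_continuousOn (hgon hsubIcc)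
  set K : ℝ := max K₀ 0 with hKdef
  have hK0 : 0 ≤ K := le_max_right _ _
  have hK : ∀ x ∈ Icc (t - δ) (t + δ), |g x| ≤ K := fun x hx =>
    le_trans (by simpa using hK₀ x hx) (le_max_left _ _)
  -- the fixed-endpoint part has the expected derivative
  have htmem : (t : ℝ) ∈ Icc (0:ℝ) T := ⟨ht0.le, htT.le⟩
  have hIocsub : Ioc (0:ℝ) t ⊆ Ioo (0:ℝ) T := fun x hx => ⟨hx.1, lt_of_le_of_lt hx.2 htT⟩
  have hgIoc : ContinuousOn g (Ioc 0 t) := hgon hIocsub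
  have hgiv : IntervalIntegrable g volume 0 t := hgint t htmem
  have hgiOn : IntegrableOn g (Ioc 0 t) volume :=
    (intervalIntegrable_iff_integrableOn_Ioc_of_le ht0.le).1 hgiv
  have hADer : HasDerivAt (fun s => ∫ r in (0:ℝ)..t, g r * F (s - r))
      (∫ r in (0:ℝ)..t, g r * fc (t - r)) t := by
    simp only [intervalIntegral.integral_of_le ht0.le]
    have hmeasF : ∀ s : ℝ, AEStronglyMeasurable (fun r => g r * F (s - r))
        (volume.restrict (Ioc 0 t)) := fun s =>
      (hgIoc.mul ((hFc.comp (continuous_const.sub continuous_id)).continuousOn)).aestronglyMeasurable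
        measurableSet_Ioc
    have hmeasF' : AEStronglyMeasurable (fun r => g r * fc (t - r))
        (volume.restrict (Ioc 0 t)) :=
      (hgIoc.mul ((hfccont.comp (continuous_const.sub continuous_id)).continuousOn)).aestronglyMeasurable
        measurableSet_Ioc
    have hintF : Integrable (fun r => g r * F (t - r)) (volume.restrict (Ioc 0 t)) := by
      have hFtc : Continuous (fun r : ℝ => F (t - r)) :=
        hFc.comp (continuous_const.sub continuous_id)
      have h : IntervalIntegrable (fun r => g r * F (t - r)) volume 0 t :=
        hgiv.mul_continuousOn hFtc.continuousOn
      exact (intervalIntegrable_iff_integrableOn_Ioc_of_le ht0.le).1 h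
    have hbd : ∀ᵐ r ∂(volume.restrict (Ioc 0 t)), ∀ s ∈ Metric.ball t 1,
        ‖g r * fc (s - r)‖ ≤ |g r| * M := by
      refine Filter.Eventually.of_forall fun r s _ => ?_
      rw [norm_mul, Real.norm_eq_abs, Real.norm_eq_abs]
      exact mul_le_mul_of_nonneg_left (hM _) (abs_nonneg _)
    have hbint : Integrable (fun r => |g r| * M) (volume.restrict (Ioc 0 t)) :=
      hgiOn.norm.mul_const M
    have hdiff : ∀ᵐ r ∂(volume.restrict (Ioc 0 t)), ∀ s ∈ Metric.ball t 1,
        HasDerivAt (fun s' => g r * F (s' - r)) (g r * fc (s - r)) s := by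
      refine Filter.Eventually.of_forall fun r s _ => ?_
      have h1 : HasDerivAt (fun s' : ℝ => F (s' - r)) (fc (s - r)) s := by
        have h := (hF (s - r)).comp s ((hasDerivAt_id s).sub_const r)
        rw [mul_one] at h; exact h
      simpa using HasDerivAt.const_mul (g r) h1
    exact (hasDerivAt_integral_of_dominated_loc_of_deriv_le
      (F := fun s r => g r * F (s - r)) (F' := fun s r => g r * fc (s - r))
      (Metric.ball_mem_nhds t one_pos) (Filter.Eventually.of_forall hmeasF) hintF hmeasF' hbd hbint hdiff).2
  -- the moving-endpoint parts
  have hB1 : HasDerivAt (fun s => ∫ r in t..s, g r * F 0) (g t * F 0) t := by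
    apply intervalIntegral.integral_hasDerivAt_right
    · exact IntervalIntegrable.refl
    · exact ContinuousOn.stronglyMeasurableAtFilter isOpen_Ioo
        ((hgon (subset_refl _)).mul continuousOn_const) t ⟨ht0, htT⟩
    · exact (hgat t ⟨ht0, htT⟩).mul continuousAt_const
  set R : ℝ → ℝ := fun s => ∫ r in t..s, g r * (F (s - r) - F 0) with hRdef
  have hR : HasDerivAt R 0 t := by
    rw [hasDerivAt_iff_isLittleO]
    simp only [hRdef, intervalIntegral.integral_same, smul_zero, sub_zero]
    have hbig : (fun s => ∫ r in t..s, g r * (F (s - r) - F 0)) =O[nhds t]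
        (fun s => (s - t) * (s - t)) := by
      rw [Asymptotics.isBigO_iff]
      refine ⟨K * M, ?_⟩
      filter_upwards [Ioo_mem_nhds (by linarith : t - δ < t) (by linarith : t < t + δ)]
        with s hs
      have hbd2 : ∀ r ∈ Set.uIoc t s, ‖g r * (F (s - r) - F 0)‖ ≤ K * (M * |s - t|) := by
        intro r hr
        have hrmem : r ∈ Icc (t - δ) (t + δ) := by
          rcases Set.mem_uIoc.1 hr with ⟨h1, h2⟩ | ⟨h1, h2⟩
          · exact ⟨by linarith, by linarith [hs.2]⟩
          · exact ⟨by linarith [hs.1], by linarith⟩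
        have h1 : |g r| ≤ K := hK r hrmem
        have h2 : |F (s - r) - F 0| ≤ M * |s - r| := hFlip (s - r)
        have h3 : |s - r| ≤ |s - t| := by
          rcases Set.mem_uIoc.1 hr with ⟨h4, h5⟩ | ⟨h4, h5⟩
          · rw [abs_of_nonneg (by linarith), abs_of_nonneg (by linarith)]; linarith
          · rw [abs_of_nonpos (by linarith), abs_of_nonpos (by linarith)]; linarith
        calc ‖g r * (F (s - r) - F 0)‖ = |g r| * |F (s - r) - F 0| := by
              rw [norm_mul, Real.norm_eq_abs, Real.norm_eq_abs]
          _ ≤ K * (M * |s - t|) :=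
              mul_le_mul h1 (h2.trans (mul_le_mul_of_nonneg_left h3 hM0)) (abs_nonneg _) hK0
      calc ‖∫ r in t..s, g r * (F (s - r) - F 0)‖
          ≤ K * (M * |s - t|) * |s - t| :=
            intervalIntegral.norm_integral_le_of_norm_le_const hbd2
        _ = K * M * ‖(s - t) * (s - t)‖ := by
            rw [Real.norm_eq_abs, abs_mul]; ring
    have hsmall : (fun s : ℝ => (s - t) * (s - t)) =o[nhds t] (fun s => s - t) := by
      rw [Asymptotics.isLittleO_iff]
      intro c hc
      filter_upwards [Metric.ball_mem_nhds t hc] with s hs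
      rw [Real.norm_eq_abs, Real.norm_eq_abs, abs_mul]
      have h : |s - t| < c := by rwa [Metric.mem_ball, Real.dist_eq] at hs
      exact mul_le_mul_of_nonneg_right h.le (abs_nonneg _)
    exact hbig.trans_isLittleO hsmall
  -- assemble
  have hsum3 : HasDerivAt
      (fun s => (∫ r in (0:ℝ)..t, g r * F (s - r)) + ((∫ r in t..s, g r * F 0) + R s))
      ((∫ r in (0:ℝ)..t, g r * fc (t - r)) + (g t * F 0 + 0)) t := hADer.add (hB1.add hR)
  have hveq : (fun s => ∫ r in (0:ℝ)..s, g r * F (s - r)) =ᶠ[nhds t]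
      (fun s => (∫ r in (0:ℝ)..t, g r * F (s - r)) + ((∫ r in t..s, g r * F 0) + R s)) := by
    filter_upwards [Ioo_mem_nhds (by linarith : t - δ < t) (by linarith : t < t + δ)]
      with s hs
    have hFscont : Continuous (fun r : ℝ => F (s - r)) :=
      hFc.comp (continuous_const.sub continuous_id)
    have i1 : IntervalIntegrable (fun r => g r * F (s - r)) volume 0 t :=
      hgiv.mul_continuousOn hFscont.continuousOn
    have huIccsub : uIcc t s ⊆ Icc (t - δ) (t + δ) :=
      Set.uIcc_subset_Icc ⟨by linarith, by linarith⟩ ⟨hs.1.le, hs.2.le⟩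
    have hgons : ContinuousOn g (uIcc t s) := hgon (fun x hx => hsubIcc (huIccsub hx))
    have i2 : IntervalIntegrable (fun r => g r * F (s - r)) volume t s :=
      (hgons.mul hFscont.continuousOn).intervalIntegrable
    have i2a : IntervalIntegrable (fun r => g r * F 0) volume t s :=
      (hgons.mul continuousOn_const).intervalIntegrable
    have i2b : IntervalIntegrable (fun r => g r * (F (s - r) - F 0)) volume t s :=
      (hgons.mul (hFscont.continuousOn.sub continuousOn_const)).intervalIntegrable
    rw [← intervalIntegral.integral_add_adjacent_intervals i1 i2]
    congr 1
    simp only [hRdef]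
    rw [← intervalIntegral.integral_add i2a i2b]
    apply intervalIntegral.integral_congr
    intro r _
    ring
  have hv : HasDerivAt (fun s => ∫ r in (0:ℝ)..s, g r * F (s - r))
      ((∫ r in (0:ℝ)..t, g r * fc (t - r)) + (g t * F 0 + 0)) t :=
    hsum3.congr_of_eventuallyEq hveq
  have hueq : (fun s : ℝ => ∫ r in (0:ℝ)..s, g r * f (s - r)) =ᶠ[nhds t]
      (fun s => ∫ r in (0:ℝ)..s, g r * F (s - r)) := by
    filter_upwards [Ioo_mem_nhds ht0 htT] with s hs
    apply intervalIntegral.integral_congr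
    intro r hr
    rw [uIcc_of_le hs.1.le] at hr
    show g r * f (s - r) = g r * F (s - r)
    rw [hFf (s - r) ⟨by linarith [hr.2], by linarith [hr.1, hs.2.le]⟩]
  have hfinal := hv.congr_of_eventuallyEq hueq
  have hval1 : ∫ r in (0:ℝ)..t, g r * fc (t - r) = ∫ r in (0:ℝ)..t, g r * f' (t - r) := by
    apply intervalIntegral.integral_congr
    intro r hr
    rw [uIcc_of_le ht0.le] at hr
    show g r * fc (t - r) = g r * f' (t - r)
    simp only [hfcdef]
    rw [hcleq (t - r) ⟨by linarith [hr.2], by linarith [hr.1, htT.le]⟩]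
  have hval2 : F 0 = f 0 := hFf 0 ⟨le_rfl, hT.le⟩
  rw [hval1, hval2] at hfinal
  have hgoal : HasDerivAt (fun s : ℝ => ∫ r in (0:ℝ)..s, g r * f (s - r))
      (g t * f 0 + ∫ r in (0:ℝ)..t, g r * f' (t - r)) t := by
    exact hfinal.congr_deriv (by ring)
  simp only [hgdef] at hgoal
  exact hgoal
end

section
/- Let γ ∈ (0,1), λ > 0, T > 0, C ≥ 0, and assume |E_{γ,γ}(-x)| ≤ C for all x ≥ 0, where E_{γ,γ} is the Mittag-Leffler function. Let f : [0,T] → ℝ be continuously differentiable and define u(t) = ∫_0^t r^{γ-1} E_{γ,γ}(-λ r^γ) f(t-r) dr. Then for every t ∈ (0,T): |u'(t)| ≤ C t^{γ-1} |f(0)| + (C/γ) t^γ sup_{s ∈ [0,T]} |f'(s)|. (This is the scalar form of the time-regularity estimate ‖∂_t u(·,t)‖ ≲ t^{γ-1} A(u_0,f) for solutions of the fractional-in-time problem with vanishing initial datum.) -/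
open MeasureTheory Real Set Filter Topology intervalIntegral

lemma measurable_tsum_real {g : ℕ → ℝ → ℝ} (h : ∀ k, Measurable (g k)) :
    Measurable (fun x => ∑' k, g k x) := by
  have hS : ∀ n, Measurable (fun x => ∑ k ∈ Finset.range n, |g k x|) :=
    fun n => Finset.measurable_sum _ (fun k _ => (h k).abs)
  have hA : MeasurableSet {x : ℝ | ∃ c : ℝ,
      Tendsto (fun n => ∑ k ∈ Finset.range n, |g k x|) atTop (𝓝 c)} :=
    measurableSet_exists_tendsto hS
  set A := {x : ℝ | ∃ c : ℝ,
      Tendsto (fun n => ∑ k ∈ Finset.range n, |g k x|) atTop (𝓝 c)} with hAdef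
  have hmem : ∀ x, x ∈ A ↔ Summable (fun k => g k x) := by
    intro x
    constructor
    · rintro ⟨c, hc⟩
      have hmono : Monotone (fun n => ∑ k ∈ Finset.range n, |g k x|) := by
        intro m n hmn
        exact Finset.sum_le_sum_of_subset_of_nonneg (Finset.range_subset_range.2 hmn)
          (fun i _ _ => abs_nonneg _)
      have hle : ∀ n, ∑ k ∈ Finset.range n, |g k x| ≤ c := fun n => hmono.ge_of_tendsto hc n
      have : Summable (fun k => |g k x|) := summable_of_sum_range_le (fun k => abs_nonneg _) hle
      exact summable_abs_iff.mp this
    · intro hs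
      exact ⟨∑' k, |g k x|, hs.abs.hasSum.tendsto_sum_nat⟩
  classical
  apply measurable_of_tendsto_metrizable
    (f := fun n x => if x ∈ A then ∑ k ∈ Finset.range n, g k x else 0)
  · intro n
    exact Measurable.ite hA (Finset.measurable_sum _ (fun k _ => h k)) measurable_const
  · rw [tendsto_pi_nhds]
    intro x
    by_cases hx : x ∈ A
    · simp only [if_pos hx]
      exact ((hmem x).mp hx).hasSum.tendsto_sum_nat
    · simp only [if_neg hx]
      rw [tsum_eq_zero_of_not_summable (fun hs => hx ((hmem x).mpr hs))]
      exact tendsto_const_nhds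

lemma measurable_rpow_const (c : ℝ) : Measurable (fun x : ℝ => x ^ c) :=
  measurable_of_continuousOn_compl_singleton 0
    (fun x hx => (Real.continuousAt_rpow_const x c (Or.inl hx)).continuousWithinAt)

lemma measurable_mittagLeffler (γ μ : ℝ) : Measurable (mittagLeffler γ μ) :=
  measurable_tsum_real (fun k => (measurable_id.pow_const k).div measurable_const)

lemma ml_integrable (γ lam C : ℝ) (hγ0 : 0 < γ) (hγ1 : γ < 1) (hlam0 : 0 ≤ lam)
    (hE : ∀ x : ℝ, 0 ≤ x → |mittagLeffler γ γ (-x)| ≤ C)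
    {a b : ℝ} (ha : 0 ≤ a) (hab : a ≤ b) :
    IntervalIntegrable (fun r : ℝ => r ^ (γ - 1) * mittagLeffler γ γ (-(lam * r ^ γ)))
      volume a b := by
  have hC : 0 ≤ C := le_trans (abs_nonneg _) (hE 0 le_rfl)
  have hmeas : Measurable (fun r : ℝ => r ^ (γ - 1) * mittagLeffler γ γ (-(lam * r ^ γ))) := by
    apply Measurable.mul
    · exact measurable_rpow_const (γ - 1)
    · exact (measurable_mittagLeffler γ γ).comp
        ((measurable_const.mul (measurable_rpow_const γ)).neg)
  have hint : IntervalIntegrable (fun r : ℝ => C * r ^ (γ - 1)) volume a b :=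
    (intervalIntegrable_rpow' (by linarith)).const_mul C
  apply hint.mono_fun hmeas.aestronglyMeasurable
  filter_upwards [ae_restrict_mem measurableSet_uIoc] with r hr
  rw [Set.uIoc_of_le hab] at hr
  have hr0 : 0 < r := lt_of_le_of_lt ha hr.1
  have hML : |mittagLeffler γ γ (-(lam * r ^ γ))| ≤ C :=
    hE _ (mul_nonneg hlam0 (Real.rpow_nonneg hr0.le γ))
  have hrp : (0:ℝ) ≤ r ^ (γ - 1) := Real.rpow_nonneg hr0.le _
  simp only [Real.norm_eq_abs, abs_mul]
  rw [abs_of_nonneg hrp, abs_of_nonneg hC, mul_comm C]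
  exact mul_le_mul_of_nonneg_left hML hrp

lemma ml_integral_bound (γ lam C K : ℝ) (hγ0 : 0 < γ) (hγ1 : γ < 1) (hlam0 : 0 ≤ lam)
    (hE : ∀ x : ℝ, 0 ≤ x → |mittagLeffler γ γ (-x)| ≤ C)
    {a b : ℝ} (ha : 0 ≤ a) (hab : a ≤ b) (g : ℝ → ℝ) (hK : 0 ≤ K)
    (hgK : ∀ r ∈ Set.Ioc a b, |g r| ≤ K) :
    |∫ r in a..b, r ^ (γ - 1) * mittagLeffler γ γ (-(lam * r ^ γ)) * g r| ≤
      C * K * ((b ^ γ - a ^ γ) / γ) := by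
  have hC : 0 ≤ C := le_trans (abs_nonneg _) (hE 0 le_rfl)
  have h1 : ‖∫ r in a..b, r ^ (γ - 1) * mittagLeffler γ γ (-(lam * r ^ γ)) * g r‖ ≤
      |∫ r in a..b, C * K * r ^ (γ - 1)| := by
    apply intervalIntegral.norm_integral_le_abs_of_norm_le
    · filter_upwards [ae_restrict_mem measurableSet_uIoc] with r hr
      rw [Set.uIoc_of_le hab] at hr
      have hr0 : 0 < r := lt_of_le_of_lt ha hr.1
      have hML : |mittagLeffler γ γ (-(lam * r ^ γ))| ≤ C :=
        hE _ (mul_nonneg hlam0 (Real.rpow_nonneg hr0.le γ))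
      have hrp : (0:ℝ) ≤ r ^ (γ - 1) := Real.rpow_nonneg hr0.le _
      have hg := hgK r hr
      simp only [Real.norm_eq_abs, abs_mul]
      rw [abs_of_nonneg hrp]
      calc r ^ (γ - 1) * |mittagLeffler γ γ (-(lam * r ^ γ))| * |g r|
          ≤ r ^ (γ - 1) * C * K := by gcongr <;> positivity
        _ = C * K * r ^ (γ - 1) := by ring
    · exact (intervalIntegrable_rpow' (by linarith)).const_mul (C * K)
  have h2 : ∫ r in a..b, C * K * r ^ (γ - 1) = C * K * ((b ^ γ - a ^ γ) / γ) := by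
    rw [intervalIntegral.integral_const_mul, integral_rpow (Or.inl (by linarith))]
    have hγ' : γ - 1 + 1 = γ := by ring
    rw [hγ']
  rw [h2] at h1
  refine le_trans h1 ?_
  have hba : a ^ γ ≤ b ^ γ := Real.rpow_le_rpow ha hab hγ0.le
  rw [abs_of_nonneg (mul_nonneg (mul_nonneg hC hK) (div_nonneg (sub_nonneg.2 hba) hγ0.le))]

/-- Time-regularity estimate for the Duhamel representation
`u(t) = ∫_0^t r^{γ-1} E_{γ,γ}(-λr^γ) f(t-r) dr` of the solution of the scalar Caputo
problem `∂_t^γ u + λ u = f`, `u(0) = 0`: any derivative `d` of `u` at `t ∈ (0,T)`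
satisfies `|d| ≤ C t^{γ-1} |f(0)| + (C/γ) t^γ sup_{[0,T]} |f'|`. -/
theorem duhamel_derivative_bound
    (γ lam T C : ℝ) (hγ : γ ∈ Set.Ioo (0 : ℝ) 1) (hlam : 0 < lam) (hT : 0 < T)
    (hC : 0 ≤ C)
    (hE : ∀ x : ℝ, 0 ≤ x → |mittagLeffler γ γ (-x)| ≤ C)
    (f f' : ℝ → ℝ)
    (hf : ∀ t ∈ Set.Icc (0 : ℝ) T, HasDerivAt f (f' t) t)
    (hf' : ContinuousOn f' (Set.Icc 0 T)) :
    ∀ t ∈ Set.Ioo (0 : ℝ) T, ∀ d : ℝ,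
      HasDerivAt
        (fun s : ℝ =>
          ∫ r in (0 : ℝ)..s, r ^ (γ - 1) * mittagLeffler γ γ (-(lam * r ^ γ)) * f (s - r))
        d t →
      |d| ≤ C * t ^ (γ - 1) * |f 0| +
          C / γ * t ^ γ * ⨆ s : Set.Icc (0 : ℝ) T, |f' (s : ℝ)| := by
  obtain ⟨hγ0, hγ1⟩ := hγ
  intro t ht d hd
  obtain ⟨ht0, htT⟩ := ht
  set u : ℝ → ℝ := fun s : ℝ =>
      ∫ r in (0 : ℝ)..s, r ^ (γ - 1) * mittagLeffler γ γ (-(lam * r ^ γ)) * f (s - r)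
    with hu
  set M : ℝ := ⨆ s : Set.Icc (0 : ℝ) T, |f' (s : ℝ)| with hMdef
  have hfc : ContinuousOn f (Set.Icc 0 T) :=
    fun x hx => ((hf x hx).continuousAt).continuousWithinAt
  have hbdd : BddAbove (Set.range fun s : Set.Icc (0:ℝ) T => |f' (s:ℝ)|) := by
    have h1 : IsCompact ((fun x => |f' x|) '' Set.Icc (0:ℝ) T) :=
      isCompact_Icc.image_of_continuousOn hf'.abs
    have h2 : (Set.range fun s : Set.Icc (0:ℝ) T => |f' (s:ℝ)|)
        = (fun x => |f' x|) '' Set.Icc (0:ℝ) T := by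
      ext y
      simp only [Set.mem_range, Set.mem_image]
      constructor
      · rintro ⟨s, rfl⟩
        exact ⟨s, s.2, rfl⟩
      · rintro ⟨x, hx, rfl⟩
        exact ⟨⟨x, hx⟩, rfl⟩
    rw [h2]
    exact h1.bddAbove
  have hM : ∀ x ∈ Set.Icc (0:ℝ) T, |f' x| ≤ M := fun x hx => le_ciSup hbdd ⟨x, hx⟩
  have hM0 : 0 ≤ M := le_trans (abs_nonneg _) (hM 0 ⟨le_refl 0, hT.le⟩)
  have hlip : ∀ x ∈ Set.Icc (0:ℝ) T, ∀ y ∈ Set.Icc (0:ℝ) T, |f x - f y| ≤ M * |x - y| := by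
    intro x hx y hy
    have := (convex_Icc (0:ℝ) T).norm_image_sub_le_of_norm_hasDerivWithin_le
      (fun z hz => (hf z hz).hasDerivWithinAt) (fun z hz => hM z hz) hy hx
    simpa [Real.norm_eq_abs] using this
  -- the dominating function
  set B : ℝ → ℝ := fun s =>
    C * (|f 0| + M * (s - t)) * ((s ^ γ - t ^ γ) / (s - t)) / γ + C * M * (t ^ γ / γ)
    with hB
  -- key pointwise estimate
  have key : ∀ s ∈ Set.Ioo t T, |slope u t s| ≤ B s := by
    intro s hs
    obtain ⟨hts, hsT⟩ := hs
    have hs0 : (0:ℝ) < s := ht0.trans hts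
    have hst : (0:ℝ) < s - t := sub_pos.2 hts
    -- continuity of the translates
    have hcont_s : ContinuousOn (fun r => f (s - r)) (Set.uIcc 0 s) := by
      rw [Set.uIcc_of_le hs0.le]
      apply hfc.comp (continuous_const.sub continuous_id).continuousOn
      intro r hr
      exact ⟨by simp [sub_nonneg]; exact hr.2, by simp; linarith [hr.1, hsT.le]⟩
    have hcont_t : ContinuousOn (fun r => f (t - r)) (Set.uIcc 0 t) := by
      rw [Set.uIcc_of_le ht0.le]
      apply hfc.comp (continuous_const.sub continuous_id).continuousOn
      intro r hr
      exact ⟨by simp [sub_nonneg]; exact hr.2, by simp; linarith [hr.1, htT.le]⟩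
    have hk0t := ml_integrable γ lam C hγ0 hγ1 hlam.le hE (le_refl (0:ℝ)) ht0.le
    have hkts := ml_integrable γ lam C hγ0 hγ1 hlam.le hE ht0.le hts.le
    have I_s0t : IntervalIntegrable
        (fun r => r ^ (γ - 1) * mittagLeffler γ γ (-(lam * r ^ γ)) * f (s - r)) volume 0 t :=
      hk0t.mul_continuousOn (hcont_s.mono (by
        rw [Set.uIcc_of_le ht0.le, Set.uIcc_of_le hs0.le]
        exact Set.Icc_subset_Icc le_rfl hts.le))
    have I_sts : IntervalIntegrable
        (fun r => r ^ (γ - 1) * mittagLeffler γ γ (-(lam * r ^ γ)) * f (s - r)) volume t s :=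
      hkts.mul_continuousOn (hcont_s.mono (by
        rw [Set.uIcc_of_le hts.le, Set.uIcc_of_le hs0.le]
        exact Set.Icc_subset_Icc ht0.le le_rfl))
    have I_t : IntervalIntegrable
        (fun r => r ^ (γ - 1) * mittagLeffler γ γ (-(lam * r ^ γ)) * f (t - r)) volume 0 t :=
      hk0t.mul_continuousOn hcont_t
    have hsplit : u s = (∫ r in (0:ℝ)..t,
          r ^ (γ - 1) * mittagLeffler γ γ (-(lam * r ^ γ)) * f (s - r))
        + ∫ r in t..s, r ^ (γ - 1) * mittagLeffler γ γ (-(lam * r ^ γ)) * f (s - r) :=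
      (intervalIntegral.integral_add_adjacent_intervals I_s0t I_sts).symm
    have hdiff : u s - u t = (∫ r in (0:ℝ)..t,
          r ^ (γ - 1) * mittagLeffler γ γ (-(lam * r ^ γ)) * (f (s - r) - f (t - r)))
        + ∫ r in t..s, r ^ (γ - 1) * mittagLeffler γ γ (-(lam * r ^ γ)) * f (s - r) := by
      rw [hsplit]
      have : (∫ r in (0:ℝ)..t,
          r ^ (γ - 1) * mittagLeffler γ γ (-(lam * r ^ γ)) * (f (s - r) - f (t - r)))
          = (∫ r in (0:ℝ)..t,
          r ^ (γ - 1) * mittagLeffler γ γ (-(lam * r ^ γ)) * f (s - r))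
          - ∫ r in (0:ℝ)..t,
          r ^ (γ - 1) * mittagLeffler γ γ (-(lam * r ^ γ)) * f (t - r) := by
        rw [← intervalIntegral.integral_sub I_s0t I_t]
        apply intervalIntegral.integral_congr
        intro r _
        ring
      rw [this, hu]
      ring
    have B1 : |∫ r in (0:ℝ)..t,
          r ^ (γ - 1) * mittagLeffler γ γ (-(lam * r ^ γ)) * (f (s - r) - f (t - r))|
        ≤ C * (M * (s - t)) * ((t ^ γ - (0:ℝ) ^ γ) / γ) := by
      apply ml_integral_bound γ lam C (M * (s - t)) hγ0 hγ1 hlam.le hE (le_refl (0:ℝ)) ht0.le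
        _ (mul_nonneg hM0 hst.le)
      intro r hr
      have h1 : s - r ∈ Set.Icc (0:ℝ) T := ⟨by linarith [hr.2], by linarith [hr.1, hsT.le]⟩
      have h2 : t - r ∈ Set.Icc (0:ℝ) T := ⟨by linarith [hr.2], by linarith [hr.1, htT.le]⟩
      have := hlip _ h1 _ h2
      have heq : s - r - (t - r) = s - t := by ring
      rw [heq, abs_of_pos hst] at this
      exact this
    have B2 : |∫ r in t..s,
          r ^ (γ - 1) * mittagLeffler γ γ (-(lam * r ^ γ)) * f (s - r)|
        ≤ C * (|f 0| + M * (s - t)) * ((s ^ γ - t ^ γ) / γ) := by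
      apply ml_integral_bound γ lam C (|f 0| + M * (s - t)) hγ0 hγ1 hlam.le hE ht0.le hts.le
        _ (by positivity)
      intro r hr
      have h1 : s - r ∈ Set.Icc (0:ℝ) T := ⟨by linarith [hr.2], by linarith [hr.1, hsT.le]⟩
      have h0 : (0:ℝ) ∈ Set.Icc (0:ℝ) T := ⟨le_refl 0, hT.le⟩
      calc |f (s - r)| = |f 0 + (f (s - r) - f 0)| := by ring_nf
        _ ≤ |f 0| + |f (s - r) - f 0| := abs_add_le _ _
        _ ≤ |f 0| + M * |s - r - 0| := by
            have := hlip _ h1 _ h0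
            linarith
        _ ≤ |f 0| + M * (s - t) := by
            have : |s - r - 0| ≤ s - t := by
              rw [abs_of_nonneg (by linarith [hr.2])]
              linarith [hr.1]
            nlinarith
    have habs : |u s - u t| ≤ C * (|f 0| + M * (s - t)) * ((s ^ γ - t ^ γ) / γ)
        + C * (M * (s - t)) * (t ^ γ / γ) := by
      rw [hdiff]
      have h0γ : (0:ℝ) ^ γ = 0 := Real.zero_rpow hγ0.ne'
      calc |_ + _| ≤ _ := abs_add_le _ _
        _ ≤ C * (M * (s - t)) * ((t ^ γ - (0:ℝ) ^ γ) / γ)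
            + C * (|f 0| + M * (s - t)) * ((s ^ γ - t ^ γ) / γ) := add_le_add B1 B2
        _ = _ := by rw [h0γ]; ring
    have hslope : |slope u t s| = |u s - u t| / (s - t) := by
      rw [slope_def_field, abs_div, abs_of_pos hst]
    rw [hslope]
    rw [div_le_iff₀ hst]
    have hBs : B s * (s - t) = C * (|f 0| + M * (s - t)) * ((s ^ γ - t ^ γ) / γ)
        + C * (M * (s - t)) * (t ^ γ / γ) := by
      rw [hB]
      field_simp
    rw [hBs]
    exact habs
  -- limits
  have hmono : 𝓝[>] t ≤ 𝓝[≠] t :=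
    nhdsWithin_mono t (fun x hx => ne_of_gt hx)
  have hslope_u : Tendsto (fun s => |slope u t s|) (𝓝[>] t) (𝓝 |d|) :=
    (continuous_abs.tendsto d).comp ((hasDerivAt_iff_tendsto_slope.mp hd).mono_left hmono)
  have hpow : Tendsto (fun s => (s ^ γ - t ^ γ) / (s - t)) (𝓝[>] t) (𝓝 (γ * t ^ (γ - 1))) := by
    have h1 : HasDerivAt (fun x : ℝ => x ^ γ) (γ * t ^ (γ - 1)) t :=
      Real.hasDerivAt_rpow_const (Or.inl ht0.ne')
    have h2 := (hasDerivAt_iff_tendsto_slope.mp h1).mono_left hmono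
    have h3 : (fun s : ℝ => (s ^ γ - t ^ γ) / (s - t)) = slope (fun x : ℝ => x ^ γ) t := by
      funext s
      rw [slope_def_field]
    rw [h3]
    exact h2
  have hsub : Tendsto (fun s : ℝ => s - t) (𝓝[>] t) (𝓝 0) := by
    have h0 : Tendsto (fun s : ℝ => s - t) (𝓝 t) (𝓝 (t - t)) :=
      (continuous_id.sub continuous_const).tendsto t
    rw [sub_self] at h0
    exact h0.mono_left nhdsWithin_le_nhds
  have hBlim : Tendsto B (𝓝[>] t)
      (𝓝 (C * (|f 0| + M * 0) * (γ * t ^ (γ - 1)) / γ + C * M * (t ^ γ / γ))) := by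
    apply Tendsto.add _ tendsto_const_nhds
    apply Tendsto.div_const
    exact (tendsto_const_nhds.mul (tendsto_const_nhds.add (tendsto_const_nhds.mul hsub))).mul hpow
  have hval : C * (|f 0| + M * 0) * (γ * t ^ (γ - 1)) / γ + C * M * (t ^ γ / γ)
      = C * t ^ (γ - 1) * |f 0| + C / γ * t ^ γ * M := by
    field_simp
    ring
  rw [hval] at hBlim
  exact le_of_tendsto_of_tendsto hslope_u hBlim
    (eventually_of_mem (Ioo_mem_nhdsGT_of_mem ⟨le_refl t, htT⟩) key)
end
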